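/- arXiv:2412.20778 — 3 statements merged into one kernel-verified Lean document; each statement's English description precedes it below -/
import Mathlib

section
/- Let u be a classical solution of the forward problem, and write ‖F‖² := ∫₀^T ∫₀^ℓ F(x,t)² dx dt. Then for every t ∈ [0,T], r₀ ∫₀^ℓ (∂ₓₓu(x,t))² dx ≤ exp(t/ρ₀) ‖F‖². In particular, the third estimate of Theorem 1 holds: sup over t ∈ [0,T] of ∫₀^ℓ (∂ₓₓu(x,t))² dx is at most (1/r₀) C_e² ‖F‖², where C_e² := exp(T/ρ₀). -/
open Set MeasureTheory
private lemma deriv_eq_of_eqOn_Ioo {f g : ℝ → ℝ} {a b t c d : ℝ}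
    (ht : t ∈ Ioo a b) (hfg : ∀ s ∈ Ioo a b, f s = g s)
    (hf : HasDerivAt f c t) (hg : HasDerivAt g d t) : c = d := by
  have hev : f =ᶠ[nhds t] g := Filter.eventuallyEq_of_mem (Ioo_mem_nhds ht.1 ht.2) hfg
  exact hf.unique (hg.congr_of_eventuallyEq hev)

private lemma sectx {ℓ T : ℝ} {H : ℝ → ℝ → ℝ}
    (hH : ContinuousOn (fun p : ℝ × ℝ => H p.1 p.2) (Icc 0 ℓ ×ˢ Icc 0 T))
    {t : ℝ} (ht : t ∈ Icc (0:ℝ) T) : ContinuousOn (fun x => H x t) (Icc (0:ℝ) ℓ) :=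
  hH.comp (Continuous.continuousOn (continuous_id.prodMk continuous_const))
    (fun _ hx => mem_prod.2 ⟨hx, ht⟩)

private lemma sectII {ℓ T : ℝ} (hℓ : 0 ≤ ℓ) {H : ℝ → ℝ → ℝ}
    (hH : ContinuousOn (fun p : ℝ × ℝ => H p.1 p.2) (Icc 0 ℓ ×ˢ Icc 0 T))
    {t : ℝ} (ht : t ∈ Icc (0:ℝ) T) : IntervalIntegrable (fun x => H x t) volume 0 ℓ := by
  apply ContinuousOn.intervalIntegrable
  rw [uIcc_of_le hℓ]
  exact sectx hH ht

private lemma contOn_param {ℓ T : ℝ} (hℓ : 0 ≤ ℓ) {H : ℝ → ℝ → ℝ}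
    (hH : ContinuousOn (fun p : ℝ × ℝ => H p.1 p.2) (Icc 0 ℓ ×ˢ Icc 0 T)) :
    ContinuousOn (fun t => ∫ x in (0:ℝ)..ℓ, H x t) (Icc (0:ℝ) T) := by
  obtain ⟨C, hC⟩ := (isCompact_Icc.prod isCompact_Icc).exists_bound_of_continuousOn hH
  intro t₀ ht₀
  apply intervalIntegral.continuousWithinAt_of_dominated_interval (bound := fun _ => C)
  · filter_upwards [self_mem_nhdsWithin] with t ht
    rw [uIoc_of_le hℓ]
    exact ((sectx hH ht).mono Ioc_subset_Icc_self).aestronglyMeasurable measurableSet_Ioc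
  · filter_upwards [self_mem_nhdsWithin] with t ht
    refine ae_of_all _ (fun x hx => ?_)
    rw [uIoc_of_le hℓ] at hx
    exact hC (x, t) ⟨Ioc_subset_Icc_self hx, ht⟩
  · exact intervalIntegrable_const
  · refine ae_of_all _ (fun x hx => ?_)
    rw [uIoc_of_le hℓ] at hx
    have hx' : x ∈ Icc (0:ℝ) ℓ := Ioc_subset_Icc_self hx
    have h1 : ContinuousWithinAt (fun p : ℝ × ℝ => H p.1 p.2) (Icc 0 ℓ ×ˢ Icc 0 T) (x, t₀) :=
      hH _ (mem_prod.2 ⟨hx', ht₀⟩)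
    exact h1.comp ((continuous_const.prodMk continuous_id).continuousWithinAt)
      (fun s hs => mem_prod.2 ⟨hx', hs⟩)

private lemma hasDerivAt_param {ℓ T : ℝ} (hℓ : 0 ≤ ℓ) {H H' : ℝ → ℝ → ℝ}
    (hH : ContinuousOn (fun p : ℝ × ℝ => H p.1 p.2) (Icc 0 ℓ ×ˢ Icc 0 T))
    (hH' : ContinuousOn (fun p : ℝ × ℝ => H' p.1 p.2) (Icc 0 ℓ ×ˢ Icc 0 T))
    (hd : ∀ x ∈ Icc (0:ℝ) ℓ, ∀ t ∈ Icc (0:ℝ) T, HasDerivAt (fun s => H x s) (H' x t) t)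
    {t₀ : ℝ} (ht₀ : t₀ ∈ Ioo (0:ℝ) T) :
    HasDerivAt (fun t => ∫ x in (0:ℝ)..ℓ, H x t) (∫ x in (0:ℝ)..ℓ, H' x t₀) t₀ := by
  obtain ⟨C, hC⟩ := (isCompact_Icc.prod isCompact_Icc).exists_bound_of_continuousOn hH'
  have hε : (0:ℝ) < min t₀ (T - t₀) := lt_min ht₀.1 (sub_pos.2 ht₀.2)
  have hball : Metric.ball t₀ (min t₀ (T - t₀)) ⊆ Icc 0 T := by
    intro s hs
    rw [Metric.mem_ball, Real.dist_eq] at hs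
    have h1 := abs_lt.1 hs
    have h2 := min_le_left t₀ (T - t₀)
    have h3 := min_le_right t₀ (T - t₀)
    constructor <;> [linarith [h1.1]; linarith [h1.2]]
  have ht₀I : t₀ ∈ Icc (0:ℝ) T := Ioo_subset_Icc_self ht₀
  refine (intervalIntegral.hasDerivAt_integral_of_dominated_loc_of_deriv_le
    (F := fun t x => H x t) (F' := fun t x => H' x t) (bound := fun _ => C)
    (Metric.ball_mem_nhds t₀ hε) ?_ ?_ ?_ ?_ intervalIntegrable_const ?_).2
  · filter_upwards [Ioo_mem_nhds ht₀.1 ht₀.2] with t ht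
    rw [uIoc_of_le hℓ]
    exact ((sectx hH (Ioo_subset_Icc_self ht)).mono Ioc_subset_Icc_self).aestronglyMeasurable
      measurableSet_Ioc
  · exact sectII hℓ hH ht₀I
  · rw [uIoc_of_le hℓ]
    exact ((sectx hH' ht₀I).mono Ioc_subset_Icc_self).aestronglyMeasurable measurableSet_Ioc
  · refine ae_of_all _ (fun x hx t ht => ?_)
    rw [uIoc_of_le hℓ] at hx
    exact hC (x, t) ⟨Ioc_subset_Icc_self hx, hball ht⟩
  · refine ae_of_all _ (fun x hx t ht => ?_)
    rw [uIoc_of_le hℓ] at hx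
    exact hd x (Ioc_subset_Icc_self hx) t (hball ht)

private lemma spatial_deriv_of_time_deriv {ℓ T : ℝ} {v vx vt vxt : ℝ → ℝ → ℝ}
    (hvx : ∀ x ∈ Icc (0:ℝ) ℓ, ∀ t ∈ Icc (0:ℝ) T, HasDerivAt (fun y => v y t) (vx x t) x)
    (hvt : ∀ x ∈ Icc (0:ℝ) ℓ, ∀ t ∈ Icc (0:ℝ) T, HasDerivAt (fun s => v x s) (vt x t) t)
    (hvxt : ∀ x ∈ Icc (0:ℝ) ℓ, ∀ t ∈ Icc (0:ℝ) T, HasDerivAt (fun s => vx x s) (vxt x t) t)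
    (cvx : ContinuousOn (fun p : ℝ × ℝ => vx p.1 p.2) (Icc 0 ℓ ×ˢ Icc 0 T))
    (cvxt : ContinuousOn (fun p : ℝ × ℝ => vxt p.1 p.2) (Icc 0 ℓ ×ˢ Icc 0 T))
    {t : ℝ} (ht : t ∈ Ioo (0:ℝ) T) {x : ℝ} (hx : x ∈ Ioo (0:ℝ) ℓ) :
    HasDerivAt (fun y => vt y t) (vxt x t) x := by
  have htI : t ∈ Icc (0:ℝ) T := Ioo_subset_Icc_self ht
  have hℓ : (0:ℝ) ≤ ℓ := le_of_lt (lt_trans hx.1 hx.2)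
  have h0I : (0:ℝ) ∈ Icc (0:ℝ) ℓ := left_mem_Icc.2 hℓ
  have key : ∀ y ∈ Icc (0:ℝ) ℓ, vt y t = vt 0 t + ∫ z in (0:ℝ)..y, vxt z t := by
    intro y hy
    have hsub : Icc (0:ℝ) y ×ˢ Icc (0:ℝ) T ⊆ Icc (0:ℝ) ℓ ×ˢ Icc 0 T :=
      prod_mono (Icc_subset_Icc_right hy.2) Subset.rfl
    have h1 : ∀ s ∈ Icc (0:ℝ) T, v y s - v 0 s = ∫ z in (0:ℝ)..y, vx z s := by
      intro s hs
      symm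
      apply intervalIntegral.integral_eq_sub_of_hasDerivAt
      · intro z hz
        rw [uIcc_of_le hy.1] at hz
        exact hvx z (Icc_subset_Icc_right hy.2 hz) s hs
      · apply ContinuousOn.intervalIntegrable
        rw [uIcc_of_le hy.1]
        exact (sectx cvx hs).mono (Icc_subset_Icc_right hy.2)
    have h2 : HasDerivAt (fun s => ∫ z in (0:ℝ)..y, vx z s) (∫ z in (0:ℝ)..y, vxt z t) t :=
      hasDerivAt_param hy.1 (cvx.mono hsub) (cvxt.mono hsub)
        (fun z hz s hs => hvxt z (Icc_subset_Icc_right hy.2 hz) s hs) ht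
    have h3 : HasDerivAt (fun s => v y s - v 0 s) (vt y t - vt 0 t) t :=
      (hvt y hy t htI).sub (hvt 0 h0I t htI)
    have h4 := deriv_eq_of_eqOn_Ioo ht (fun s hs => h1 s (Ioo_subset_Icc_self hs)) h3 h2
    linarith
  have hcont : ContinuousOn (fun z => vxt z t) (Icc (0:ℝ) ℓ) := sectx cvxt htI
  have hint : IntervalIntegrable (fun z => vxt z t) volume 0 x := by
    apply ContinuousOn.intervalIntegrable
    rw [uIcc_of_le hx.1.le]
    exact hcont.mono (Icc_subset_Icc_right hx.2.le)
  have hftc : HasDerivAt (fun y => vt 0 t + ∫ z in (0:ℝ)..y, vxt z t) (vxt x t) x := by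
    have h5 : HasDerivAt (fun y => ∫ z in (0:ℝ)..y, vxt z t) (vxt x t) x :=
      intervalIntegral.integral_hasDerivAt_right hint
        ((hcont.mono Ioo_subset_Icc_self).stronglyMeasurableAtFilter isOpen_Ioo x hx)
        (hcont.continuousAt (Icc_mem_nhds hx.1 hx.2))
    simpa using h5.const_add (vt 0 t)
  refine hftc.congr_of_eventuallyEq ?_
  filter_upwards [Ioo_mem_nhds hx.1 hx.2] with y hy using key y (Ioo_subset_Icc_self hy)


/-- A classical solution of the forward problem for the damped Euler–Bernoulli beam
equation `ρ_A(x) uₜₜ + μ(x) uₜ − (T_r(x) uₓ)ₓ + (r(x) uₓₓ + κ(x) uₓₓₜ)ₓₓ = F(x,t)` on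
`(0,ℓ) × (0,T)`, with homogeneous initial conditions and simply supported boundary
conditions.  The fields `ux, uxx, ut, utt, uxt, uxxt` are the partial derivatives of
`u`, `Ax` is the spatial derivative of `T_r(x) uₓ`, and `Bx, Bxx` are the first and
second spatial derivatives of the bending moment `B(x,t) = r(x) uₓₓ + κ(x) uₓₓₜ`. -/
structure ForwardSol (ℓ T : ℝ) (ρA μ Tr r κ : ℝ → ℝ) (F : ℝ → ℝ → ℝ) where
  u : ℝ → ℝ → ℝ
  ux : ℝ → ℝ → ℝ
  uxx : ℝ → ℝ → ℝ
  ut : ℝ → ℝ → ℝ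
  utt : ℝ → ℝ → ℝ
  uxt : ℝ → ℝ → ℝ
  uxxt : ℝ → ℝ → ℝ
  Ax : ℝ → ℝ → ℝ
  Bx : ℝ → ℝ → ℝ
  Bxx : ℝ → ℝ → ℝ
  smooth : ContDiffOn ℝ (⊤ : ℕ∞) (fun p : ℝ × ℝ => u p.1 p.2) (Icc 0 ℓ ×ˢ Icc 0 T)
  hux : ∀ x ∈ Icc (0:ℝ) ℓ, ∀ t ∈ Icc (0:ℝ) T, HasDerivAt (fun y => u y t) (ux x t) x
  huxx : ∀ x ∈ Icc (0:ℝ) ℓ, ∀ t ∈ Icc (0:ℝ) T, HasDerivAt (fun y => ux y t) (uxx x t) x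
  hut : ∀ x ∈ Icc (0:ℝ) ℓ, ∀ t ∈ Icc (0:ℝ) T, HasDerivAt (fun s => u x s) (ut x t) t
  hutt : ∀ x ∈ Icc (0:ℝ) ℓ, ∀ t ∈ Icc (0:ℝ) T, HasDerivAt (fun s => ut x s) (utt x t) t
  huxt : ∀ x ∈ Icc (0:ℝ) ℓ, ∀ t ∈ Icc (0:ℝ) T, HasDerivAt (fun s => ux x s) (uxt x t) t
  huxxt : ∀ x ∈ Icc (0:ℝ) ℓ, ∀ t ∈ Icc (0:ℝ) T, HasDerivAt (fun s => uxx x s) (uxxt x t) t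
  hAx : ∀ x ∈ Icc (0:ℝ) ℓ, ∀ t ∈ Icc (0:ℝ) T,
    HasDerivAt (fun y => Tr y * ux y t) (Ax x t) x
  hBx : ∀ x ∈ Icc (0:ℝ) ℓ, ∀ t ∈ Icc (0:ℝ) T,
    HasDerivAt (fun y => r y * uxx y t + κ y * uxxt y t) (Bx x t) x
  hBxx : ∀ x ∈ Icc (0:ℝ) ℓ, ∀ t ∈ Icc (0:ℝ) T, HasDerivAt (fun y => Bx y t) (Bxx x t) x
  cont_ux : ContinuousOn (fun p : ℝ × ℝ => ux p.1 p.2) (Icc 0 ℓ ×ˢ Icc 0 T)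
  cont_uxx : ContinuousOn (fun p : ℝ × ℝ => uxx p.1 p.2) (Icc 0 ℓ ×ˢ Icc 0 T)
  cont_ut : ContinuousOn (fun p : ℝ × ℝ => ut p.1 p.2) (Icc 0 ℓ ×ˢ Icc 0 T)
  cont_utt : ContinuousOn (fun p : ℝ × ℝ => utt p.1 p.2) (Icc 0 ℓ ×ˢ Icc 0 T)
  cont_uxt : ContinuousOn (fun p : ℝ × ℝ => uxt p.1 p.2) (Icc 0 ℓ ×ˢ Icc 0 T)
  cont_uxxt : ContinuousOn (fun p : ℝ × ℝ => uxxt p.1 p.2) (Icc 0 ℓ ×ˢ Icc 0 T)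
  cont_Ax : ContinuousOn (fun p : ℝ × ℝ => Ax p.1 p.2) (Icc 0 ℓ ×ˢ Icc 0 T)
  cont_Bx : ContinuousOn (fun p : ℝ × ℝ => Bx p.1 p.2) (Icc 0 ℓ ×ˢ Icc 0 T)
  cont_Bxx : ContinuousOn (fun p : ℝ × ℝ => Bxx p.1 p.2) (Icc 0 ℓ ×ˢ Icc 0 T)
  pde : ∀ x ∈ Ioo (0:ℝ) ℓ, ∀ t ∈ Ioo (0:ℝ) T,
    ρA x * utt x t + μ x * ut x t - Ax x t + Bxx x t = F x t
  init_u : ∀ x ∈ Ioo (0:ℝ) ℓ, u x 0 = 0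
  init_ut : ∀ x ∈ Ioo (0:ℝ) ℓ, ut x 0 = 0
  bc_u0 : ∀ t ∈ Icc (0:ℝ) T, u 0 t = 0
  bc_ul : ∀ t ∈ Icc (0:ℝ) T, u ℓ t = 0
  bc_m0 : ∀ t ∈ Icc (0:ℝ) T, r 0 * uxx 0 t + κ 0 * uxxt 0 t = 0
  bc_ml : ∀ t ∈ Icc (0:ℝ) T, r ℓ * uxx ℓ t + κ ℓ * uxxt ℓ t = 0

/-- **The third estimate of Theorem 1.** -/
theorem curvature_energy_estimate
    (ℓ T ρ₀ r₀ κ₀ : ℝ) (hℓ : 0 < ℓ) (hT : 0 < T)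
    (hρ₀ : 0 < ρ₀) (hr₀ : 0 < r₀) (hκ₀ : 0 < κ₀)
    (ρA μ Tr r κ : ℝ → ℝ) (F : ℝ → ℝ → ℝ)
    (hρA : ContDiffOn ℝ (⊤ : ℕ∞) ρA (Icc 0 ℓ))
    (hμ : ContDiffOn ℝ (⊤ : ℕ∞) μ (Icc 0 ℓ))
    (hTr : ContDiffOn ℝ (⊤ : ℕ∞) Tr (Icc 0 ℓ))
    (hr : ContDiffOn ℝ (⊤ : ℕ∞) r (Icc 0 ℓ))
    (hκ : ContDiffOn ℝ (⊤ : ℕ∞) κ (Icc 0 ℓ))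
    (hρAb : ∀ x ∈ Icc (0:ℝ) ℓ, ρ₀ ≤ ρA x)
    (hμb : ∀ x ∈ Icc (0:ℝ) ℓ, 0 ≤ μ x)
    (hTrb : ∀ x ∈ Icc (0:ℝ) ℓ, 0 ≤ Tr x)
    (hrb : ∀ x ∈ Icc (0:ℝ) ℓ, r₀ ≤ r x)
    (hκb : ∀ x ∈ Icc (0:ℝ) ℓ, κ₀ ≤ κ x)
    (hF : ContinuousOn (fun p : ℝ × ℝ => F p.1 p.2) (Icc 0 ℓ ×ˢ Icc 0 T))
    (sol : ForwardSol ℓ T ρA μ Tr r κ F) :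
    (∀ t ∈ Icc (0:ℝ) T,
      r₀ * (∫ x in (0:ℝ)..ℓ, (sol.uxx x t) ^ 2)
        ≤ Real.exp (t / ρ₀) * (∫ t in (0:ℝ)..T, ∫ x in (0:ℝ)..ℓ, (F x t) ^ 2)) ∧
    (∀ t ∈ Icc (0:ℝ) T,
      (∫ x in (0:ℝ)..ℓ, (sol.uxx x t) ^ 2)
        ≤ (1 / r₀) * Real.exp (T / ρ₀) * (∫ t in (0:ℝ)..T, ∫ x in (0:ℝ)..ℓ, (F x t) ^ 2)) := by
  have hℓ' : (0:ℝ) ≤ ℓ := hℓ.le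
  have h0x : (0:ℝ) ∈ Icc (0:ℝ) ℓ := left_mem_Icc.2 hℓ'
  have hℓx : ℓ ∈ Icc (0:ℝ) ℓ := right_mem_Icc.2 hℓ'
  have h0T : (0:ℝ) ∈ Icc (0:ℝ) T := left_mem_Icc.2 hT.le
  -- continuity of coefficients as functions on the product set
  have cfst : ∀ {f : ℝ → ℝ}, ContinuousOn f (Icc (0:ℝ) ℓ) →
      ContinuousOn (fun p : ℝ × ℝ => f p.1) (Icc (0:ℝ) ℓ ×ˢ Icc (0:ℝ) T) :=
    fun hf => hf.comp continuous_fst.continuousOn (fun _ hp => hp.1)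
  have cρA := cfst hρA.continuousOn
  have cμ := cfst hμ.continuousOn
  have cTr := cfst hTr.continuousOn
  have cr := cfst hr.continuousOn
  have cκ := cfst hκ.continuousOn
  -- the energy density and its time derivative
  set e : ℝ → ℝ → ℝ := fun x s =>
    ρA x * (sol.ut x s * sol.ut x s) + Tr x * (sol.ux x s * sol.ux x s)
      + r x * (sol.uxx x s * sol.uxx x s) with he_def
  set e' : ℝ → ℝ → ℝ := fun x s =>
    ρA x * (sol.utt x s * sol.ut x s + sol.ut x s * sol.utt x s)
      + Tr x * (sol.uxt x s * sol.ux x s + sol.ux x s * sol.uxt x s)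
      + r x * (sol.uxxt x s * sol.uxx x s + sol.uxx x s * sol.uxxt x s) with he'_def
  have ce : ContinuousOn (fun p : ℝ × ℝ => e p.1 p.2) (Icc 0 ℓ ×ˢ Icc 0 T) :=
    ((cρA.mul (sol.cont_ut.mul sol.cont_ut)).add
      (cTr.mul (sol.cont_ux.mul sol.cont_ux))).add
      (cr.mul (sol.cont_uxx.mul sol.cont_uxx))
  have ce' : ContinuousOn (fun p : ℝ × ℝ => e' p.1 p.2) (Icc 0 ℓ ×ˢ Icc 0 T) :=
    ((cρA.mul ((sol.cont_utt.mul sol.cont_ut).add (sol.cont_ut.mul sol.cont_utt))).add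
      (cTr.mul ((sol.cont_uxt.mul sol.cont_ux).add (sol.cont_ux.mul sol.cont_uxt)))).add
      (cr.mul ((sol.cont_uxxt.mul sol.cont_uxx).add (sol.cont_uxx.mul sol.cont_uxxt)))
  have hde : ∀ x ∈ Icc (0:ℝ) ℓ, ∀ s ∈ Icc (0:ℝ) T,
      HasDerivAt (fun τ => e x τ) (e' x s) s := by
    intro x hx s hs
    exact ((((sol.hutt x hx s hs).mul (sol.hutt x hx s hs)).const_mul (ρA x)).add
      (((sol.huxt x hx s hs).mul (sol.huxt x hx s hs)).const_mul (Tr x))).add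
      (((sol.huxxt x hx s hs).mul (sol.huxxt x hx s hs)).const_mul (r x))
  set E : ℝ → ℝ := fun s => ∫ x in (0:ℝ)..ℓ, e x s with hE_def
  set g : ℝ → ℝ := fun s => ∫ x in (0:ℝ)..ℓ, F x s ^ 2 with hg_def
  have hEcont : ContinuousOn E (Icc (0:ℝ) T) := contOn_param hℓ' ce
  have hEderiv : ∀ t ∈ Ioo (0:ℝ) T, HasDerivAt E (∫ x in (0:ℝ)..ℓ, e' x t) t :=
    fun t ht => hasDerivAt_param hℓ' ce ce' hde ht
  have cF2 : ContinuousOn (fun p : ℝ × ℝ => F p.1 p.2 ^ 2) (Icc 0 ℓ ×ˢ Icc 0 T) := hF.pow 2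
  have hgcont : ContinuousOn g (Icc (0:ℝ) T) := contOn_param hℓ' cF2
  have hgnn : ∀ s, 0 ≤ g s :=
    fun s => intervalIntegral.integral_nonneg hℓ' (fun x _ => sq_nonneg _)
  have hsingℓ : ∀ᵐ x : ℝ ∂(volume : Measure ℝ), x ≠ ℓ := by
    have h1 : (volume : Measure ℝ) {ℓ} = 0 := measure_singleton ℓ
    rw [MeasureTheory.ae_iff]
    simpa using h1
  -- the crucial differential inequality
  have hmain : ∀ t ∈ Ioo (0:ℝ) T,
      (∫ x in (0:ℝ)..ℓ, e' x t) ≤ (1/ρ₀) * E t + g t := by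
    intro t ht
    have htI : t ∈ Icc (0:ℝ) T := Ioo_subset_Icc_self ht
    have hut0 : sol.ut 0 t = 0 :=
      deriv_eq_of_eqOn_Ioo ht (fun s hs => sol.bc_u0 s (Ioo_subset_Icc_self hs))
        (sol.hut 0 h0x t htI) (hasDerivAt_const t 0)
    have hutl : sol.ut ℓ t = 0 :=
      deriv_eq_of_eqOn_Ioo ht (fun s hs => sol.bc_ul s (Ioo_subset_Icc_self hs))
        (sol.hut ℓ hℓx t htI) (hasDerivAt_const t 0)
    have hDut : ∀ x ∈ Ioo (0:ℝ) ℓ, HasDerivAt (fun y => sol.ut y t) (sol.uxt x t) x :=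
      fun x hx => spatial_deriv_of_time_deriv sol.hux sol.hut sol.huxt
        sol.cont_ux sol.cont_uxt ht hx
    have hDuxt : ∀ x ∈ Ioo (0:ℝ) ℓ, HasDerivAt (fun y => sol.uxt y t) (sol.uxxt x t) x :=
      fun x hx => spatial_deriv_of_time_deriv sol.huxx sol.huxt sol.huxxt
        sol.cont_uxx sol.cont_uxxt ht hx
    have hRIoo : Ioo (min (0:ℝ) ℓ) (max (0:ℝ) ℓ) = Ioo (0:ℝ) ℓ := by
      rw [min_eq_left hℓ', max_eq_right hℓ']
    have hcut : ContinuousOn (fun x => sol.ut x t) (Set.uIcc (0:ℝ) ℓ) := by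
      rw [uIcc_of_le hℓ']; exact sectx sol.cont_ut htI
    have hcuxt : ContinuousOn (fun x => sol.uxt x t) (Set.uIcc (0:ℝ) ℓ) := by
      rw [uIcc_of_le hℓ']; exact sectx sol.cont_uxt htI
    -- integration by parts, tension term
    have ibp1 : ∫ x in (0:ℝ)..ℓ, sol.ut x t * sol.Ax x t
        = - ∫ x in (0:ℝ)..ℓ, Tr x * (sol.ux x t * sol.uxt x t) := by
      have h := intervalIntegral.integral_mul_deriv_eq_deriv_mul_of_hasDerivAt
        (u := fun x => sol.ut x t) (v := fun x => Tr x * sol.ux x t)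
        (u' := fun x => sol.uxt x t) (v' := fun x => sol.Ax x t)
        hcut (by rw [uIcc_of_le hℓ']; exact hTr.continuousOn.mul (sectx sol.cont_ux htI))
        (fun x hx => hDut x (hRIoo ▸ hx))
        (fun x hx => sol.hAx x (Ioo_subset_Icc_self (hRIoo ▸ hx)) t htI)
        (sectII hℓ' sol.cont_uxt htI) (sectII hℓ' sol.cont_Ax htI)
      simp only [hut0, hutl, zero_mul, mul_zero, sub_zero, zero_sub] at h
      have hcg : (∫ x in (0:ℝ)..ℓ, sol.uxt x t * (Tr x * sol.ux x t))
          = ∫ x in (0:ℝ)..ℓ, Tr x * (sol.ux x t * sol.uxt x t) :=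
        intervalIntegral.integral_congr (fun x _ => by ring)
      rw [h, hcg]
    -- integration by parts twice, bending term
    have ibp2 : ∫ x in (0:ℝ)..ℓ, sol.ut x t * sol.Bxx x t
        = (∫ x in (0:ℝ)..ℓ, r x * (sol.uxx x t * sol.uxxt x t))
          + ∫ x in (0:ℝ)..ℓ, κ x * (sol.uxxt x t * sol.uxxt x t) := by
      have h1 := intervalIntegral.integral_mul_deriv_eq_deriv_mul_of_hasDerivAt
        (u := fun x => sol.ut x t) (v := fun x => sol.Bx x t)
        (u' := fun x => sol.uxt x t) (v' := fun x => sol.Bxx x t)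
        hcut (by rw [uIcc_of_le hℓ']; exact sectx sol.cont_Bx htI)
        (fun x hx => hDut x (hRIoo ▸ hx))
        (fun x hx => sol.hBxx x (Ioo_subset_Icc_self (hRIoo ▸ hx)) t htI)
        (sectII hℓ' sol.cont_uxt htI) (sectII hℓ' sol.cont_Bxx htI)
      simp only [hut0, hutl, zero_mul, mul_zero, sub_zero, zero_sub] at h1
      have h2 := intervalIntegral.integral_mul_deriv_eq_deriv_mul_of_hasDerivAt
        (u := fun x => sol.uxt x t) (v := fun x => r x * sol.uxx x t + κ x * sol.uxxt x t)
        (u' := fun x => sol.uxxt x t) (v' := fun x => sol.Bx x t)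
        hcuxt
        (by rw [uIcc_of_le hℓ']
            exact (hr.continuousOn.mul (sectx sol.cont_uxx htI)).add
              (hκ.continuousOn.mul (sectx sol.cont_uxxt htI)))
        (fun x hx => hDuxt x (hRIoo ▸ hx))
        (fun x hx => sol.hBx x (Ioo_subset_Icc_self (hRIoo ▸ hx)) t htI)
        (sectII hℓ' sol.cont_uxxt htI) (sectII hℓ' sol.cont_Bx htI)
      simp only [sol.bc_m0 t htI, sol.bc_ml t htI, zero_mul, mul_zero, sub_zero, zero_sub] at h2
      have h3 : ∫ x in (0:ℝ)..ℓ, sol.uxxt x t * (r x * sol.uxx x t + κ x * sol.uxxt x t)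
          = (∫ x in (0:ℝ)..ℓ, r x * (sol.uxx x t * sol.uxxt x t))
            + ∫ x in (0:ℝ)..ℓ, κ x * (sol.uxxt x t * sol.uxxt x t) := by
        have ha := sectII hℓ' (H := fun x s => r x * (sol.uxx x s * sol.uxxt x s))
          (cr.mul (sol.cont_uxx.mul sol.cont_uxxt)) htI
        have hb := sectII hℓ' (H := fun x s => κ x * (sol.uxxt x s * sol.uxxt x s))
          (cκ.mul (sol.cont_uxxt.mul sol.cont_uxxt)) htI
        rw [← intervalIntegral.integral_add ha hb]
        exact intervalIntegral.integral_congr (fun x _ => by ring)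
      rw [h1, h2, h3]
      ring
    -- interval integrability of the pieces
    have i1 := sectII hℓ' (H := fun x s => sol.ut x s * F x s) (sol.cont_ut.mul hF) htI
    have i2 := sectII hℓ' (H := fun x s => μ x * (sol.ut x s * sol.ut x s))
      (cμ.mul (sol.cont_ut.mul sol.cont_ut)) htI
    have i3 := sectII hℓ' (H := fun x s => sol.ut x s * sol.Ax x s)
      (sol.cont_ut.mul sol.cont_Ax) htI
    have i4 := sectII hℓ' (H := fun x s => sol.ut x s * sol.Bxx x s)
      (sol.cont_ut.mul sol.cont_Bxx) htI
    have i5 := sectII hℓ' (H := fun x s => Tr x * (sol.ux x s * sol.uxt x s))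
      (cTr.mul (sol.cont_ux.mul sol.cont_uxt)) htI
    have i6 := sectII hℓ' (H := fun x s => r x * (sol.uxx x s * sol.uxxt x s))
      (cr.mul (sol.cont_uxx.mul sol.cont_uxxt)) htI
    have i7 := sectII hℓ' (H := fun x s => κ x * (sol.uxxt x s * sol.uxxt x s))
      (cκ.mul (sol.cont_uxxt.mul sol.cont_uxxt)) htI
    have ie := sectII hℓ' (H := fun x s => e x s) ce htI
    have iF2 := sectII hℓ' (H := fun x s => F x s ^ 2) cF2 htI
    -- substitute the PDE and split the integral
    have heq : (∫ x in (0:ℝ)..ℓ, e' x t)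
        = 2 * (∫ x in (0:ℝ)..ℓ, sol.ut x t * F x t)
          - 2 * (∫ x in (0:ℝ)..ℓ, μ x * (sol.ut x t * sol.ut x t))
          + 2 * (∫ x in (0:ℝ)..ℓ, sol.ut x t * sol.Ax x t)
          - 2 * (∫ x in (0:ℝ)..ℓ, sol.ut x t * sol.Bxx x t)
          + 2 * (∫ x in (0:ℝ)..ℓ, Tr x * (sol.ux x t * sol.uxt x t))
          + 2 * (∫ x in (0:ℝ)..ℓ, r x * (sol.uxx x t * sol.uxxt x t)) := by
      have hq : (∫ x in (0:ℝ)..ℓ, e' x t)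
          = ∫ x in (0:ℝ)..ℓ, (2 * (sol.ut x t * F x t)
            - 2 * (μ x * (sol.ut x t * sol.ut x t))
            + 2 * (sol.ut x t * sol.Ax x t)
            - 2 * (sol.ut x t * sol.Bxx x t)
            + 2 * (Tr x * (sol.ux x t * sol.uxt x t))
            + 2 * (r x * (sol.uxx x t * sol.uxxt x t))) := by
        apply intervalIntegral.integral_congr_ae
        filter_upwards [hsingℓ] with x hne hmem
        rw [uIoc_of_le hℓ'] at hmem
        have hx : x ∈ Ioo (0:ℝ) ℓ := ⟨hmem.1, lt_of_le_of_ne hmem.2 hne⟩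
        have hpde := sol.pde x hx t ht
        simp only [he'_def]
        linear_combination (2 * sol.ut x t) * hpde
      rw [hq,
        intervalIntegral.integral_add
          (((((i1.const_mul 2).sub (i2.const_mul 2)).add (i3.const_mul 2)).sub
            (i4.const_mul 2)).add (i5.const_mul 2)) (i6.const_mul 2),
        intervalIntegral.integral_add
          ((((i1.const_mul 2).sub (i2.const_mul 2)).add (i3.const_mul 2)).sub
            (i4.const_mul 2)) (i5.const_mul 2),
        intervalIntegral.integral_sub
          (((i1.const_mul 2).sub (i2.const_mul 2)).add (i3.const_mul 2)) (i4.const_mul 2),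
        intervalIntegral.integral_add
          ((i1.const_mul 2).sub (i2.const_mul 2)) (i3.const_mul 2),
        intervalIntegral.integral_sub (i1.const_mul 2) (i2.const_mul 2),
        intervalIntegral.integral_const_mul, intervalIntegral.integral_const_mul,
        intervalIntegral.integral_const_mul, intervalIntegral.integral_const_mul,
        intervalIntegral.integral_const_mul, intervalIntegral.integral_const_mul]
    have hkey : (∫ x in (0:ℝ)..ℓ, e' x t)
        = 2 * (∫ x in (0:ℝ)..ℓ, sol.ut x t * F x t)
          - 2 * (∫ x in (0:ℝ)..ℓ, μ x * (sol.ut x t * sol.ut x t))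
          - 2 * (∫ x in (0:ℝ)..ℓ, κ x * (sol.uxxt x t * sol.uxxt x t)) := by
      rw [heq, ibp1, ibp2]; ring
    have hn2 : 0 ≤ ∫ x in (0:ℝ)..ℓ, μ x * (sol.ut x t * sol.ut x t) :=
      intervalIntegral.integral_nonneg hℓ'
        (fun x hx => mul_nonneg (hμb x hx) (mul_self_nonneg _))
    have hn7 : 0 ≤ ∫ x in (0:ℝ)..ℓ, κ x * (sol.uxxt x t * sol.uxxt x t) :=
      intervalIntegral.integral_nonneg hℓ'
        (fun x hx => mul_nonneg (hκ₀.le.trans (hκb x hx)) (mul_self_nonneg _))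
    -- pointwise Cauchy–Schwarz + coercivity bound
    have hpt : ∀ x ∈ Icc (0:ℝ) ℓ,
        2 * (sol.ut x t * F x t) ≤ (1/ρ₀) * e x t + F x t ^ 2 := by
      intro x hx
      have h1 := hρAb x hx
      have h2 := hTrb x hx
      have h3 := hr₀.le.trans (hrb x hx)
      have key1 : sol.ut x t * sol.ut x t
          ≤ (1/ρ₀) * (ρA x * (sol.ut x t * sol.ut x t)) := by
        have h0 : ρ₀ * (sol.ut x t * sol.ut x t) ≤ ρA x * (sol.ut x t * sol.ut x t) :=
          mul_le_mul_of_nonneg_right h1 (mul_self_nonneg _)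
        calc sol.ut x t * sol.ut x t = (1/ρ₀) * (ρ₀ * (sol.ut x t * sol.ut x t)) := by
              field_simp
          _ ≤ (1/ρ₀) * (ρA x * (sol.ut x t * sol.ut x t)) := by
              apply mul_le_mul_of_nonneg_left h0; positivity
      have key2 : 0 ≤ (1/ρ₀) * (Tr x * (sol.ux x t * sol.ux x t)) :=
        mul_nonneg (by positivity) (mul_nonneg h2 (mul_self_nonneg _))
      have key3 : 0 ≤ (1/ρ₀) * (r x * (sol.uxx x t * sol.uxx x t)) :=
        mul_nonneg (by positivity) (mul_nonneg h3 (mul_self_nonneg _))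
      have key4 : 2 * (sol.ut x t * F x t) ≤ sol.ut x t * sol.ut x t + F x t ^ 2 := by
        nlinarith [sq_nonneg (sol.ut x t - F x t)]
      have hex : (1/ρ₀) * e x t + F x t ^ 2
          = (1/ρ₀) * (ρA x * (sol.ut x t * sol.ut x t))
            + ((1/ρ₀) * (Tr x * (sol.ux x t * sol.ux x t))
            + ((1/ρ₀) * (r x * (sol.uxx x t * sol.uxx x t)) + F x t ^ 2)) := by
        simp only [he_def]; ring
      rw [hex]; linarith
    have hmono := intervalIntegral.integral_mono_on hℓ' (i1.const_mul 2)
      ((ie.const_mul (1/ρ₀)).add iF2) hpt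
    rw [intervalIntegral.integral_add (ie.const_mul (1/ρ₀)) iF2,
      intervalIntegral.integral_const_mul, intervalIntegral.integral_const_mul] at hmono
    have hEt : E t = ∫ x in (0:ℝ)..ℓ, e x t := rfl
    have hgt : g t = ∫ x in (0:ℝ)..ℓ, F x t ^ 2 := rfl
    rw [hkey, hEt, hgt]
    linarith
  -- initial energy vanishes
  have hux0 : ∀ y ∈ Ioo (0:ℝ) ℓ, sol.ux y 0 = 0 := by
    intro y hy
    exact deriv_eq_of_eqOn_Ioo hy (fun z hz => sol.init_u z hz)
      (sol.hux y (Ioo_subset_Icc_self hy) 0 h0T) (hasDerivAt_const y 0)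
  have huxx0 : ∀ y ∈ Ioo (0:ℝ) ℓ, sol.uxx y 0 = 0 := by
    intro y hy
    exact deriv_eq_of_eqOn_Ioo hy hux0
      (sol.huxx y (Ioo_subset_Icc_self hy) 0 h0T) (hasDerivAt_const y 0)
  have hE0 : E 0 = 0 := by
    have hz : (∫ x in (0:ℝ)..ℓ, e x 0) = ∫ x in (0:ℝ)..ℓ, (0:ℝ) := by
      apply intervalIntegral.integral_congr_ae
      filter_upwards [hsingℓ] with x hne hmem
      rw [uIoc_of_le hℓ'] at hmem
      have hx : x ∈ Ioo (0:ℝ) ℓ := ⟨hmem.1, lt_of_le_of_ne hmem.2 hne⟩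
      simp only [he_def, sol.init_ut x hx, hux0 x hx, huxx0 x hx]
      ring
    have hE0' : E 0 = ∫ x in (0:ℝ)..ℓ, e x 0 := rfl
    rw [hE0', hz, intervalIntegral.integral_zero]
  -- Grönwall via a monotone auxiliary function
  set q : ℝ → ℝ := fun s => Real.exp (-(s/ρ₀)) with hq_def
  have hqc : Continuous q := Real.continuous_exp.comp (continuous_id.div_const ρ₀).neg
  set Φ : ℝ → ℝ := fun s => q s * E s - ∫ τ in (0:ℝ)..s, q τ * g τ with hΦ_def
  have hgint : ∀ s ∈ Icc (0:ℝ) T, IntervalIntegrable (fun τ => q τ * g τ) volume 0 s := by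
    intro s hs
    apply ContinuousOn.intervalIntegrable
    rw [uIcc_of_le hs.1]
    exact hqc.continuousOn.mul (hgcont.mono (Icc_subset_Icc_right hs.2))
  have hgint2 : ∀ s ∈ Icc (0:ℝ) T, IntervalIntegrable g volume 0 s := by
    intro s hs
    apply ContinuousOn.intervalIntegrable
    rw [uIcc_of_le hs.1]
    exact hgcont.mono (Icc_subset_Icc_right hs.2)
  have hprim_cont : ContinuousOn (fun s => ∫ τ in (0:ℝ)..s, q τ * g τ) (Icc (0:ℝ) T) := by
    have h1 : IntegrableOn (fun τ => q τ * g τ) (Set.uIcc (0:ℝ) T) volume := by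
      rw [uIcc_of_le hT.le]
      exact (hqc.continuousOn.mul hgcont).integrableOn_Icc
    have h2 := intervalIntegral.continuousOn_primitive_interval h1
    rwa [uIcc_of_le hT.le] at h2
  have hΦcont : ContinuousOn Φ (Icc (0:ℝ) T) := (hqc.continuousOn.mul hEcont).sub hprim_cont
  have hΦderiv : ∀ s ∈ Ioo (0:ℝ) T, HasDerivAt Φ
      ((-(1/ρ₀) * q s) * E s + q s * (∫ x in (0:ℝ)..ℓ, e' x s) - q s * g s) s := by
    intro s hs
    have hsI : s ∈ Icc (0:ℝ) T := Ioo_subset_Icc_self hs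
    have h1 : HasDerivAt q (-(1/ρ₀) * q s) s := by
      have h0 : HasDerivAt (fun τ : ℝ => -(τ/ρ₀)) (-(1/ρ₀)) s :=
        ((hasDerivAt_id s).div_const ρ₀).neg
      simpa [hq_def, mul_comm] using h0.exp
    have h2 := hEderiv s hs
    have h3 : HasDerivAt (fun σ => ∫ τ in (0:ℝ)..σ, q τ * g τ) (q s * g s) s := by
      apply intervalIntegral.integral_hasDerivAt_right (hgint s hsI)
      · exact (hqc.continuousOn.mul
          (hgcont.mono Ioo_subset_Icc_self)).stronglyMeasurableAtFilter isOpen_Ioo s hs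
      · exact hqc.continuousAt.mul (hgcont.continuousAt (Icc_mem_nhds hs.1 hs.2))
    exact (h1.mul h2).sub h3
  have hΦanti : AntitoneOn Φ (Icc (0:ℝ) T) := by
    apply antitoneOn_of_deriv_nonpos (convex_Icc 0 T) hΦcont
    · intro s hs
      rw [interior_Icc] at hs
      exact (hΦderiv s hs).differentiableAt.differentiableWithinAt
    · intro s hs
      rw [interior_Icc] at hs
      rw [(hΦderiv s hs).deriv]
      have hqpos : (0:ℝ) < q s := Real.exp_pos _
      have hb := hmain s hs
      nlinarith [mul_le_mul_of_nonneg_left hb hqpos.le]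
  have hbound : ∀ t ∈ Icc (0:ℝ) T, E t ≤ Real.exp (t/ρ₀) * ∫ τ in (0:ℝ)..T, g τ := by
    intro t ht
    have h1 : Φ t ≤ Φ 0 := hΦanti (left_mem_Icc.2 hT.le) ht ht.1
    have h2 : Φ 0 = 0 := by simp [hΦ_def, hq_def, hE0]
    have h3 : (∫ τ in (0:ℝ)..t, q τ * g τ) ≤ ∫ τ in (0:ℝ)..t, g τ := by
      apply intervalIntegral.integral_mono_on ht.1 (hgint t ht) (hgint2 t ht)
      intro τ hτ
      have hq1 : q τ ≤ 1 := by
        rw [hq_def]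
        exact Real.exp_le_one_iff.2 (neg_nonpos.2 (div_nonneg hτ.1 hρ₀.le))
      nlinarith [hgnn τ]
    have h4 : (∫ τ in (0:ℝ)..t, g τ) ≤ ∫ τ in (0:ℝ)..T, g τ := by
      apply intervalIntegral.integral_mono_interval le_rfl ht.1 ht.2
      · exact (ae_restrict_iff' measurableSet_Ioc).2 (ae_of_all _ (fun τ _ => hgnn τ))
      · exact hgint2 T (right_mem_Icc.2 hT.le)
    have h5 : q t * E t ≤ ∫ τ in (0:ℝ)..T, g τ := by
      have h6 : Φ t = q t * E t - ∫ τ in (0:ℝ)..t, q τ * g τ := rfl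
      rw [h2, h6] at h1
      linarith
    have hqe : Real.exp (t/ρ₀) * q t = 1 := by
      rw [hq_def, ← Real.exp_add]
      simp
    have h7 := mul_le_mul_of_nonneg_left h5 (Real.exp_pos (t/ρ₀)).le
    calc E t = Real.exp (t/ρ₀) * q t * E t := by rw [hqe]; ring
      _ = Real.exp (t/ρ₀) * (q t * E t) := by ring
      _ ≤ Real.exp (t/ρ₀) * ∫ τ in (0:ℝ)..T, g τ := h7
  have hcoer : ∀ t ∈ Icc (0:ℝ) T,
      r₀ * (∫ x in (0:ℝ)..ℓ, sol.uxx x t ^ 2) ≤ E t := by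
    intro t ht
    have hi := sectII hℓ' (H := fun x s => sol.uxx x s ^ 2) (sol.cont_uxx.pow 2) ht
    rw [← intervalIntegral.integral_const_mul]
    apply intervalIntegral.integral_mono_on hℓ' (hi.const_mul r₀)
      (sectII hℓ' (H := fun x s => e x s) ce ht)
    intro x hx
    simp only [he_def]
    nlinarith [mul_nonneg (hρ₀.le.trans (hρAb x hx)) (mul_self_nonneg (sol.ut x t)),
      mul_nonneg (hTrb x hx) (mul_self_nonneg (sol.ux x t)),
      mul_le_mul_of_nonneg_right (hrb x hx) (mul_self_nonneg (sol.uxx x t))]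
  have part1 : ∀ t ∈ Icc (0:ℝ) T,
      r₀ * (∫ x in (0:ℝ)..ℓ, sol.uxx x t ^ 2)
        ≤ Real.exp (t / ρ₀) * ∫ τ in (0:ℝ)..T, g τ := by
    intro t ht
    exact le_trans (hcoer t ht) (hbound t ht)
  have hNnn : (0:ℝ) ≤ ∫ τ in (0:ℝ)..T, g τ :=
    intervalIntegral.integral_nonneg hT.le (fun τ _ => hgnn τ)
  refine ⟨part1, ?_⟩
  intro t ht
  have h1 := part1 t ht
  have h2 : Real.exp (t/ρ₀) * (∫ τ in (0:ℝ)..T, g τ)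
      ≤ Real.exp (T/ρ₀) * ∫ τ in (0:ℝ)..T, g τ :=
    mul_le_mul_of_nonneg_right (Real.exp_le_exp.2 ((div_le_div_iff_of_pos_right hρ₀).2 ht.2)) hNnn
  have h4 : (∫ x in (0:ℝ)..ℓ, sol.uxx x t ^ 2)
      ≤ (Real.exp (T/ρ₀) * ∫ τ in (0:ℝ)..T, g τ) / r₀ := by
    rw [le_div_iff₀ hr₀]
    linarith
  calc (∫ x in (0:ℝ)..ℓ, sol.uxx x t ^ 2)
      ≤ (Real.exp (T/ρ₀) * ∫ τ in (0:ℝ)..T, g τ) / r₀ := h4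
    _ = 1 / r₀ * Real.exp (T / ρ₀) * ∫ τ in (0:ℝ)..T, g τ := by ring
end

section
/- Let u be a classical solution of the forward problem, and write ‖F‖² := ∫₀^T ∫₀^ℓ F(x,t)² dx dt. Then ∫₀^T ∫₀^ℓ (∂ₓₓu(x,t))² dx dt ≤ (ρ₀/r₀)(C_e² − 1) ‖F‖², where C_e² := exp(T/ρ₀). -/
open Set

open MeasureTheory Filter

open MeasureTheory Filter in
lemma hasDerivAt_swap_param {v vx vt vxt : ℝ → ℝ → ℝ} {x s : ℝ}
    (hV : ContDiffAt ℝ 3 (fun p : ℝ × ℝ => v p.1 p.2) (x, s))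
    (hvx : ∀ᶠ p : ℝ × ℝ in nhds (x, s), HasDerivAt (fun y => v y p.2) (vx p.1 p.2) p.1)
    (hvt : ∀ᶠ p : ℝ × ℝ in nhds (x, s), HasDerivAt (fun τ => v p.1 τ) (vt p.1 p.2) p.2)
    (hvxt : HasDerivAt (fun τ => vx x τ) (vxt x s) s) :
    HasDerivAt (fun y => vt y s) (vxt x s) x := by
  set V : ℝ × ℝ → ℝ := fun p => v p.1 p.2 with hVdef
  set f' : ℝ × ℝ → (ℝ × ℝ) →L[ℝ] ℝ := fderiv ℝ V with hf'def
  have hev : ∀ᶠ p in nhds (x, s), HasFDerivAt V (f' p) p := by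
    filter_upwards [hV.eventually (by simp)] with p hp
    exact (hp.differentiableAt (by norm_num)).hasFDerivAt
  have hf'2 : ContDiffAt ℝ 2 f' (x, s) := hV.fderiv_right (by norm_num)
  have hf'' : HasFDerivAt f' (fderiv ℝ f' (x, s)) (x, s) :=
    (hf'2.differentiableAt (by norm_num)).hasFDerivAt
  set f'' := fderiv ℝ f' (x, s) with hf''def
  have hsymm : ∀ a b : ℝ × ℝ, f'' a b = f'' b a :=
    second_derivative_symmetric_of_eventually hev hf''
  have hvt_eq : ∀ᶠ p : ℝ × ℝ in nhds (x, s), vt p.1 p.2 = f' p (0, 1) := by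
    filter_upwards [hev, hvt] with p hp1 hp2
    have hline : HasDerivAt (fun τ : ℝ => ((p.1, τ) : ℝ × ℝ)) (0, 1) p.2 :=
      (hasDerivAt_const _ _).prodMk (hasDerivAt_id _)
    exact hp2.unique (hp1.comp_hasDerivAt p.2 hline :)
  have hvx_eq : ∀ᶠ p : ℝ × ℝ in nhds (x, s), vx p.1 p.2 = f' p (1, 0) := by
    filter_upwards [hev, hvx] with p hp1 hp2
    have hline : HasDerivAt (fun y : ℝ => ((y, p.2) : ℝ × ℝ)) (1, 0) p.1 :=
      (hasDerivAt_id _).prodMk (hasDerivAt_const _ _)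
    exact hp2.unique (hp1.comp_hasDerivAt p.1 hline :)
  have hg : HasDerivAt (fun y => f' (y, s)) (f'' (1, 0)) x := by
    have hline : HasDerivAt (fun y : ℝ => ((y, s) : ℝ × ℝ)) (1, 0) x :=
      (hasDerivAt_id _).prodMk (hasDerivAt_const _ _)
    exact hf''.comp_hasDerivAt x hline
  have hg1 : HasDerivAt (fun y => f' (y, s) (0, 1)) (f'' (1, 0) (0, 1)) x :=
    (ContinuousLinearMap.apply ℝ ℝ ((0:ℝ), (1:ℝ))).hasFDerivAt.comp_hasDerivAt x hg
  have hgt : HasDerivAt (fun τ => f' (x, τ) (1, 0)) (f'' (0, 1) (1, 0)) s := by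
    have hline : HasDerivAt (fun τ : ℝ => ((x, τ) : ℝ × ℝ)) (0, 1) s :=
      (hasDerivAt_const _ _).prodMk (hasDerivAt_id _)
    exact (ContinuousLinearMap.apply ℝ ℝ ((1:ℝ), (0:ℝ))).hasFDerivAt.comp_hasDerivAt s
      (hf''.comp_hasDerivAt s hline)
  have hev_t : ∀ᶠ τ in nhds s, vx x τ = f' (x, τ) (1, 0) :=
    ((Continuous.prodMk continuous_const continuous_id).tendsto s).eventually hvx_eq
  have h1 : vxt x s = f'' (0, 1) (1, 0) := hvxt.unique (hgt.congr_of_eventuallyEq hev_t)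
  have hev_x : ∀ᶠ y in nhds x, vt y s = f' (y, s) (0, 1) :=
    ((Continuous.prodMk continuous_id continuous_const).tendsto x).eventually hvt_eq
  have h2 : HasDerivAt (fun y => vt y s) (f'' (1, 0) (0, 1)) x :=
    hg1.congr_of_eventuallyEq hev_x
  rw [h1, ← hsymm]
  exact h2

open MeasureTheory in
lemma intervalIntegral_congr_Ioo {f g : ℝ → ℝ} {a b : ℝ} (hab : a ≤ b)
    (h : ∀ x ∈ Ioo a b, f x = g x) :
    ∫ x in a..b, f x = ∫ x in a..b, g x := by
  rw [intervalIntegral.integral_of_le hab, intervalIntegral.integral_of_le hab,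
    integral_Ioc_eq_integral_Ioo, integral_Ioc_eq_integral_Ioo]
  exact setIntegral_congr_fun measurableSet_Ioo h

open MeasureTheory in
lemma intervalIntegral_mono_Ioo {f g : ℝ → ℝ} {a b : ℝ} (hab : a ≤ b)
    (hf : IntervalIntegrable f volume a b) (hg : IntervalIntegrable g volume a b)
    (h : ∀ x ∈ Ioo a b, f x ≤ g x) :
    ∫ x in a..b, f x ≤ ∫ x in a..b, g x := by
  rw [intervalIntegral.integral_of_le hab, intervalIntegral.integral_of_le hab,
    integral_Ioc_eq_integral_Ioo, integral_Ioc_eq_integral_Ioo]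
  exact setIntegral_mono_on (hf.1.mono_set Ioo_subset_Ioc_self)
    (hg.1.mono_set Ioo_subset_Ioc_self) measurableSet_Ioo h

open MeasureTheory in
lemma continuousOn_param {H : ℝ → ℝ → ℝ} {a b c d : ℝ} (hab : a ≤ b)
    (hH : ContinuousOn (fun p : ℝ × ℝ => H p.1 p.2) (Icc a b ×ˢ Icc c d)) :
    ContinuousOn (fun t => ∫ x in a..b, H x t) (Icc c d) := by
  have hK : IsCompact (Icc a b ×ˢ Icc c d) := isCompact_Icc.prod isCompact_Icc
  have hUC := hK.uniformContinuousOn_of_continuous hH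
  rw [Metric.uniformContinuousOn_iff] at hUC
  rw [Metric.continuousOn_iff]
  intro t ht ε hε
  have hba : 0 ≤ b - a := by linarith
  have hε' : 0 < ε / (b - a + 1) := by positivity
  obtain ⟨δ, hδ, hδ'⟩ := hUC (ε / (b - a + 1)) hε'
  refine ⟨δ, hδ, fun t' ht' hd => ?_⟩
  have hint : ∀ τ ∈ Icc c d, IntervalIntegrable (fun x => H x τ) volume a b := by
    intro τ hτ
    apply ContinuousOn.intervalIntegrable
    rw [uIcc_of_le hab]
    exact hH.comp (Continuous.continuousOn (continuous_id.prodMk continuous_const))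
      (fun x hx => ⟨hx, hτ⟩)
  have hsub : (∫ x in a..b, H x t') - ∫ x in a..b, H x t
      = ∫ x in a..b, (H x t' - H x t) :=
    (intervalIntegral.integral_sub (hint t' ht') (hint t ht)).symm
  have hbd : ‖∫ x in a..b, (H x t' - H x t)‖ ≤ (ε / (b - a + 1)) * |b - a| := by
    apply intervalIntegral.norm_integral_le_of_norm_le_const
    intro x hx
    rw [uIoc_of_le hab] at hx
    have hxI : x ∈ Icc a b := Ioc_subset_Icc_self hx
    have := hδ' (x, t') ⟨hxI, ht'⟩ (x, t) ⟨hxI, ht⟩ (by simpa [Prod.dist_eq, dist_nonneg] using hd)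
    rw [Real.norm_eq_abs, ← Real.dist_eq]
    exact le_of_lt this
  rw [Real.dist_eq, ← Real.norm_eq_abs, hsub]
  calc ‖∫ x in a..b, (H x t' - H x t)‖ ≤ (ε / (b - a + 1)) * |b - a| := hbd
    _ < ε := by
        rw [abs_of_nonneg hba, div_mul_eq_mul_div, div_lt_iff₀ (by linarith)]
        nlinarith

lemma hasDerivAt_sq {f : ℝ → ℝ} {f' s : ℝ} (h : HasDerivAt f f' s) :
    HasDerivAt (fun τ => (f τ)^2) (2 * f s * f') s := by
  have h2 : HasDerivAt (fun τ => f τ * f τ) (f' * f s + f s * f') s := h.mul h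
  have he : (fun τ => (f τ)^2) = fun τ => f τ * f τ := by ext τ; ring
  rw [he]
  convert h2 using 1
  ring
set_option maxHeartbeats 1600000
/-- **The fourth estimate of Theorem 1.** -/
theorem curvature_L2_estimate
    (ℓ T ρ₀ r₀ κ₀ : ℝ) (hℓ : 0 < ℓ) (hT : 0 < T)
    (hρ₀ : 0 < ρ₀) (hr₀ : 0 < r₀) (hκ₀ : 0 < κ₀)
    (ρA μ Tr r κ : ℝ → ℝ) (F : ℝ → ℝ → ℝ)
    (hρA : ContDiffOn ℝ (⊤ : ℕ∞) ρA (Icc 0 ℓ))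
    (hμ : ContDiffOn ℝ (⊤ : ℕ∞) μ (Icc 0 ℓ))
    (hTr : ContDiffOn ℝ (⊤ : ℕ∞) Tr (Icc 0 ℓ))
    (hr : ContDiffOn ℝ (⊤ : ℕ∞) r (Icc 0 ℓ))
    (hκ : ContDiffOn ℝ (⊤ : ℕ∞) κ (Icc 0 ℓ))
    (hρAb : ∀ x ∈ Icc (0:ℝ) ℓ, ρ₀ ≤ ρA x)
    (hμb : ∀ x ∈ Icc (0:ℝ) ℓ, 0 ≤ μ x)
    (hTrb : ∀ x ∈ Icc (0:ℝ) ℓ, 0 ≤ Tr x)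
    (hrb : ∀ x ∈ Icc (0:ℝ) ℓ, r₀ ≤ r x)
    (hκb : ∀ x ∈ Icc (0:ℝ) ℓ, κ₀ ≤ κ x)
    (hF : ContinuousOn (fun p : ℝ × ℝ => F p.1 p.2) (Icc 0 ℓ ×ˢ Icc 0 T))
    (sol : ForwardSol ℓ T ρA μ Tr r κ F) :
    (∫ t in (0:ℝ)..T, ∫ x in (0:ℝ)..ℓ, (sol.uxx x t) ^ 2)
      ≤ (ρ₀ / r₀) * (Real.exp (T / ρ₀) - 1) * (∫ t in (0:ℝ)..T, ∫ x in (0:ℝ)..ℓ, (F x t) ^ 2) := by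
  obtain ⟨u, ux, uxx, ut, utt, uxt, uxxt, Ax, Bx, Bxx, smooth, hux, huxx, hut, hutt, huxt,
    huxxt, hAx, hBx, hBxx, cux, cuxx, cut, cutt, cuxt, cuxxt, cAx, cBx, cBxx, pde, iu, iut,
    b0, bl, m0, ml⟩ := sol
  show (∫ t in (0:ℝ)..T, ∫ x in (0:ℝ)..ℓ, (uxx x t) ^ 2)
      ≤ (ρ₀ / r₀) * (Real.exp (T / ρ₀) - 1) * (∫ t in (0:ℝ)..T, ∫ x in (0:ℝ)..ℓ, (F x t) ^ 2)
  have hl0 : (0:ℝ) ≤ ℓ := hℓ.le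
  have hT0 : (0:ℝ) ≤ T := hT.le
  have cρA := hρA.continuousOn
  have cμ := hμ.continuousOn
  have cTr := hTr.continuousOn
  have cr := hr.continuousOn
  have cκ := hκ.continuousOn
  have cf1 : ∀ {f : ℝ → ℝ}, ContinuousOn f (Icc 0 ℓ) →
      ContinuousOn (fun p : ℝ × ℝ => f p.1) (Icc 0 ℓ ×ˢ Icc 0 T) :=
    fun hf => hf.comp continuous_fst.continuousOn (fun p hp => hp.1)
  have sliceT : ∀ (f : ℝ → ℝ → ℝ), ContinuousOn (fun p : ℝ × ℝ => f p.1 p.2) (Icc 0 ℓ ×ˢ Icc 0 T) →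
      ∀ (x : ℝ), x ∈ Icc (0:ℝ) ℓ → ContinuousOn (fun s => f x s) (Icc 0 T) :=
    fun f hf x hx => hf.comp (Continuous.continuousOn (continuous_const.prodMk continuous_id))
      (fun s hs => ⟨hx, hs⟩)
  have sliceX : ∀ (f : ℝ → ℝ → ℝ), ContinuousOn (fun p : ℝ × ℝ => f p.1 p.2) (Icc 0 ℓ ×ˢ Icc 0 T) →
      ∀ (t : ℝ), t ∈ Icc (0:ℝ) T → ContinuousOn (fun x => f x t) (Icc 0 ℓ) :=
    fun f hf t ht => hf.comp (Continuous.continuousOn (continuous_id.prodMk continuous_const))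
      (fun x hx => ⟨hx, ht⟩)
  -- zero values at time 0
  have hux0 : ∀ x ∈ Ioo (0:ℝ) ℓ, ux x 0 = 0 := by
    intro x hx
    have h1 : HasDerivAt (fun y => u y 0) (ux x 0) x :=
      hux x (Ioo_subset_Icc_self hx) 0 (left_mem_Icc.2 hT0)
    have he : (fun y => u y 0) =ᶠ[nhds x] fun _ => (0:ℝ) := by
      filter_upwards [Ioo_mem_nhds hx.1 hx.2] with y hy using iu y hy
    exact h1.unique ((hasDerivAt_const x (0:ℝ)).congr_of_eventuallyEq he)
  have huxx0 : ∀ x ∈ Ioo (0:ℝ) ℓ, uxx x 0 = 0 := by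
    intro x hx
    have h1 : HasDerivAt (fun y => ux y 0) (uxx x 0) x :=
      huxx x (Ioo_subset_Icc_self hx) 0 (left_mem_Icc.2 hT0)
    have he : (fun y => ux y 0) =ᶠ[nhds x] fun _ => (0:ℝ) := by
      filter_upwards [Ioo_mem_nhds hx.1 hx.2] with y hy using hux0 y hy
    exact h1.unique ((hasDerivAt_const x (0:ℝ)).congr_of_eventuallyEq he)
  -- boundary values of ut
  have hut0 : ∀ s ∈ Ioo (0:ℝ) T, ut 0 s = 0 := by
    intro s hs
    have h1 : HasDerivAt (fun τ => u 0 τ) (ut 0 s) s :=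
      hut 0 (left_mem_Icc.2 hl0) s (Ioo_subset_Icc_self hs)
    have he : (fun τ => u 0 τ) =ᶠ[nhds s] fun _ => (0:ℝ) := by
      filter_upwards [Ioo_mem_nhds hs.1 hs.2] with τ hτ using b0 τ (Ioo_subset_Icc_self hτ)
    exact h1.unique ((hasDerivAt_const s (0:ℝ)).congr_of_eventuallyEq he)
  have hutl : ∀ s ∈ Ioo (0:ℝ) T, ut ℓ s = 0 := by
    intro s hs
    have h1 : HasDerivAt (fun τ => u ℓ τ) (ut ℓ s) s :=
      hut ℓ (right_mem_Icc.2 hl0) s (Ioo_subset_Icc_self hs)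
    have he : (fun τ => u ℓ τ) =ᶠ[nhds s] fun _ => (0:ℝ) := by
      filter_upwards [Ioo_mem_nhds hs.1 hs.2] with τ hτ using bl τ (Ioo_subset_Icc_self hτ)
    exact h1.unique ((hasDerivAt_const s (0:ℝ)).congr_of_eventuallyEq he)
  -- neighborhoods
  have hopen : ∀ {x s : ℝ}, x ∈ Ioo (0:ℝ) ℓ → s ∈ Ioo (0:ℝ) T →
      Ioo (0:ℝ) ℓ ×ˢ Ioo (0:ℝ) T ∈ nhds ((x, s) : ℝ × ℝ) :=
    fun hx hs => (isOpen_Ioo.prod isOpen_Ioo).mem_nhds ⟨hx, hs⟩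
  have hmemK : ∀ {x s : ℝ}, x ∈ Ioo (0:ℝ) ℓ → s ∈ Ioo (0:ℝ) T →
      Icc (0:ℝ) ℓ ×ˢ Icc (0:ℝ) T ∈ nhds ((x, s) : ℝ × ℝ) :=
    fun hx hs => Filter.mem_of_superset (hopen hx hs)
      (prod_mono Ioo_subset_Icc_self Ioo_subset_Icc_self)
  -- Schwarz: x-derivative of ut is uxt
  have schwarz_u : ∀ x ∈ Ioo (0:ℝ) ℓ, ∀ s ∈ Ioo (0:ℝ) T,
      HasDerivAt (fun y => ut y s) (uxt x s) x := by
    intro x hx s hs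
    apply hasDerivAt_swap_param ((smooth.contDiffAt (hmemK hx hs)).of_le (by norm_cast))
    · filter_upwards [hopen hx hs] with p hp using
        hux p.1 (Ioo_subset_Icc_self hp.1) p.2 (Ioo_subset_Icc_self hp.2)
    · filter_upwards [hopen hx hs] with p hp using
        hut p.1 (Ioo_subset_Icc_self hp.1) p.2 (Ioo_subset_Icc_self hp.2)
    · exact huxt x (Ioo_subset_Icc_self hx) s (Ioo_subset_Icc_self hs)
  -- smoothness of ux and Schwarz for uxt
  have hux_smooth : ∀ x ∈ Ioo (0:ℝ) ℓ, ∀ s ∈ Ioo (0:ℝ) T,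
      ContDiffAt ℝ 3 (fun p : ℝ × ℝ => ux p.1 p.2) (x, s) := by
    intro x hx s hs
    have hU4 : ContDiffAt ℝ 4 (fun p : ℝ × ℝ => u p.1 p.2) (x, s) :=
      (smooth.contDiffAt (hmemK hx hs)).of_le (by norm_cast)
    have hf' : ContDiffAt ℝ 3 (fderiv ℝ (fun p : ℝ × ℝ => u p.1 p.2)) (x, s) :=
      hU4.fderiv_right (by norm_num)
    have h3 : ContDiffAt ℝ 3
        (fun p : ℝ × ℝ => fderiv ℝ (fun q : ℝ × ℝ => u q.1 q.2) p (1, 0)) (x, s) :=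
      hf'.clm_apply contDiffAt_const
    apply h3.congr_of_eventuallyEq
    filter_upwards [hopen hx hs] with p hp
    have hd : HasFDerivAt (fun q : ℝ × ℝ => u q.1 q.2)
        (fderiv ℝ (fun q : ℝ × ℝ => u q.1 q.2) p) p :=
      ((smooth.contDiffAt (hmemK hp.1 hp.2)).differentiableAt (by norm_cast)).hasFDerivAt
    have hline : HasDerivAt (fun y : ℝ => ((y, p.2) : ℝ × ℝ)) (1, 0) p.1 :=
      (hasDerivAt_id _).prodMk (hasDerivAt_const _ _)
    exact (hux p.1 (Ioo_subset_Icc_self hp.1) p.2 (Ioo_subset_Icc_self hp.2)).unique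
      (hd.comp_hasDerivAt p.1 hline :)
  have schwarz_ux : ∀ x ∈ Ioo (0:ℝ) ℓ, ∀ s ∈ Ioo (0:ℝ) T,
      HasDerivAt (fun y => uxt y s) (uxxt x s) x := by
    intro x hx s hs
    apply hasDerivAt_swap_param (hux_smooth x hx s hs)
    · filter_upwards [hopen hx hs] with p hp using
        huxx p.1 (Ioo_subset_Icc_self hp.1) p.2 (Ioo_subset_Icc_self hp.2)
    · filter_upwards [hopen hx hs] with p hp using
        huxt p.1 (Ioo_subset_Icc_self hp.1) p.2 (Ioo_subset_Icc_self hp.2)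
    · exact huxxt x (Ioo_subset_Icc_self hx) s (Ioo_subset_Icc_self hs)
  -- uncurried continuity of key integrands
  have cEd : ContinuousOn (fun p : ℝ × ℝ =>
      ρA p.1 * (ut p.1 p.2)^2 + Tr p.1 * (ux p.1 p.2)^2 + r p.1 * (uxx p.1 p.2)^2)
      (Icc 0 ℓ ×ˢ Icc 0 T) :=
    (((cf1 cρA).mul (cut.pow 2)).add ((cf1 cTr).mul (cux.pow 2))).add
      ((cf1 cr).mul (cuxx.pow 2))
  have cW : ContinuousOn (fun p : ℝ × ℝ =>
      2*(ρA p.1 * utt p.1 p.2 * ut p.1 p.2) + 2*(Tr p.1 * ux p.1 p.2 * uxt p.1 p.2) +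
        (2*(r p.1 * uxx p.1 p.2 * uxxt p.1 p.2) + 2*(κ p.1 * (uxxt p.1 p.2)^2)))
      (Icc 0 ℓ ×ˢ Icc 0 T) :=
    ((continuousOn_const.mul (((cf1 cρA).mul cutt).mul cut)).add
      (continuousOn_const.mul (((cf1 cTr).mul cux).mul cuxt))).add
      ((continuousOn_const.mul (((cf1 cr).mul cuxx).mul cuxxt)).add
        (continuousOn_const.mul ((cf1 cκ).mul (cuxxt.pow 2))))
  have cQ : ContinuousOn (fun p : ℝ × ℝ => 2*(κ p.1 * (uxxt p.1 p.2)^2)) (Icc 0 ℓ ×ˢ Icc 0 T) :=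
    continuousOn_const.mul ((cf1 cκ).mul (cuxxt.pow 2))
  have cF2 : ContinuousOn (fun p : ℝ × ℝ => (F p.1 p.2)^2) (Icc 0 ℓ ×ˢ Icc 0 T) := hF.pow 2
  have cuxx2 : ContinuousOn (fun p : ℝ × ℝ => (uxx p.1 p.2)^2) (Icc 0 ℓ ×ˢ Icc 0 T) := cuxx.pow 2
  -- time fundamental theorem of calculus, for x in the open interval
  have timeFTC : ∀ x ∈ Ioo (0:ℝ) ℓ, ∀ t ∈ Icc (0:ℝ) T,
      (∫ s in (0:ℝ)..t, (2*(ρA x * utt x s * ut x s) + 2*(Tr x * ux x s * uxt x s) +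
          (2*(r x * uxx x s * uxxt x s) + 2*(κ x * (uxxt x s)^2)) - 2*(κ x * (uxxt x s)^2)))
        = ρA x * (ut x t)^2 + Tr x * (ux x t)^2 + r x * (uxx x t)^2 := by
    intro x hx t ht
    have hxI := Ioo_subset_Icc_self hx
    have hsub : Icc (0:ℝ) t ⊆ Icc 0 T := Icc_subset_Icc le_rfl ht.2
    have hderiv : ∀ s ∈ uIcc (0:ℝ) t,
        HasDerivAt (fun τ => ρA x * (ut x τ)^2 + Tr x * (ux x τ)^2 + r x * (uxx x τ)^2)
          (2*(ρA x * utt x s * ut x s) + 2*(Tr x * ux x s * uxt x s) +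
            (2*(r x * uxx x s * uxxt x s) + 2*(κ x * (uxxt x s)^2)) - 2*(κ x * (uxxt x s)^2)) s := by
      intro s hs
      rw [uIcc_of_le ht.1] at hs
      have hsT := hsub hs
      have h1 := (hasDerivAt_sq (hutt x hxI s hsT)).const_mul (ρA x)
      have h2 := (hasDerivAt_sq (huxt x hxI s hsT)).const_mul (Tr x)
      have h3 := (hasDerivAt_sq (huxxt x hxI s hsT)).const_mul (r x)
      have h := (h1.fun_add h2).fun_add h3
      exact h.congr_deriv (by ring)
    have hint : IntervalIntegrable (fun s =>
        2*(ρA x * utt x s * ut x s) + 2*(Tr x * ux x s * uxt x s) +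
          (2*(r x * uxx x s * uxxt x s) + 2*(κ x * (uxxt x s)^2)) - 2*(κ x * (uxxt x s)^2))
        volume 0 t := by
      apply ContinuousOn.intervalIntegrable
      rw [uIcc_of_le ht.1]
      exact ((sliceT (fun x s => 2*(ρA x * utt x s * ut x s) + 2*(Tr x * ux x s * uxt x s) +
          (2*(r x * uxx x s * uxxt x s) + 2*(κ x * (uxxt x s)^2))) cW x hxI).sub
        (sliceT (fun x s => 2*(κ x * (uxxt x s)^2)) cQ x hxI)).mono hsub
    rw [intervalIntegral.integral_eq_sub_of_hasDerivAt hderiv hint]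
    rw [iut x hx, hux0 x hx, huxx0 x hx]
    ring
  have hEt : ∀ t ∈ Icc (0:ℝ) T,
      (∫ x in (0:ℝ)..ℓ, (ρA x * (ut x t)^2 + Tr x * (ux x t)^2 + r x * (uxx x t)^2))
        = ∫ x in (0:ℝ)..ℓ, (∫ s in (0:ℝ)..t, (2*(ρA x * utt x s * ut x s) +
            2*(Tr x * ux x s * uxt x s) +
            (2*(r x * uxx x s * uxxt x s) + 2*(κ x * (uxxt x s)^2)) - 2*(κ x * (uxxt x s)^2))) :=
    fun t ht => intervalIntegral_congr_Ioo hl0 (fun x hx => (timeFTC x hx t ht).symm)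
  -- integration by parts in x, at fixed interior time s
  have IBP1 : ∀ s ∈ Ioo (0:ℝ) T,
      (∫ x in (0:ℝ)..ℓ, (2*(Ax x s * ut x s) + 2*(Tr x * ux x s * uxt x s))) = 0 := by
    intro s hs
    have hsI := Ioo_subset_Icc_self hs
    have hcont : ContinuousOn (fun x => 2*(Tr x * ux x s * ut x s)) (Icc 0 ℓ) :=
      continuousOn_const.mul ((cTr.mul (sliceX (fun a b => ux a b) cux s hsI)).mul
        (sliceX (fun a b => ut a b) cut s hsI))
    have hderiv : ∀ x ∈ Ioo (0:ℝ) ℓ, HasDerivWithinAt (fun x => 2*(Tr x * ux x s * ut x s))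
        (2*(Ax x s * ut x s) + 2*(Tr x * ux x s * uxt x s)) (Ioi x) x := by
      intro x hx
      have hxI := Ioo_subset_Icc_self hx
      have h := ((hAx x hxI s hsI).fun_mul (schwarz_u x hx s hs)).const_mul 2
      have h2 : HasDerivAt (fun x => 2*(Tr x * ux x s * ut x s))
          (2*(Ax x s * ut x s) + 2*(Tr x * ux x s * uxt x s)) x := by
        exact h.congr_deriv (by ring)
      exact h2.hasDerivWithinAt
    have hint : IntervalIntegrable (fun x => 2*(Ax x s * ut x s) + 2*(Tr x * ux x s * uxt x s))
        volume 0 ℓ := by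
      apply ContinuousOn.intervalIntegrable
      rw [uIcc_of_le hl0]
      exact (continuousOn_const.mul ((sliceX (fun a b => Ax a b) cAx s hsI).mul
          (sliceX (fun a b => ut a b) cut s hsI))).add
        (continuousOn_const.mul ((cTr.mul (sliceX (fun a b => ux a b) cux s hsI)).mul
          (sliceX (fun a b => uxt a b) cuxt s hsI)))
    rw [intervalIntegral.integral_eq_sub_of_hasDeriv_right_of_le hl0 hcont hderiv hint]
    rw [hut0 s hs, hutl s hs]
    ring
  have IBP2 : ∀ s ∈ Ioo (0:ℝ) T,
      (∫ x in (0:ℝ)..ℓ, (2*(Bx x s * uxt x s) +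
        2*((r x * uxx x s + κ x * uxxt x s) * uxxt x s))) = 0 := by
    intro s hs
    have hsI := Ioo_subset_Icc_self hs
    have hcont : ContinuousOn (fun x => 2*((r x * uxx x s + κ x * uxxt x s) * uxt x s))
        (Icc 0 ℓ) :=
      continuousOn_const.mul (((cr.mul (sliceX (fun a b => uxx a b) cuxx s hsI)).add
        (cκ.mul (sliceX (fun a b => uxxt a b) cuxxt s hsI))).mul
        (sliceX (fun a b => uxt a b) cuxt s hsI))
    have hderiv : ∀ x ∈ Ioo (0:ℝ) ℓ,
        HasDerivWithinAt (fun x => 2*((r x * uxx x s + κ x * uxxt x s) * uxt x s))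
          (2*(Bx x s * uxt x s) + 2*((r x * uxx x s + κ x * uxxt x s) * uxxt x s)) (Ioi x) x := by
      intro x hx
      have hxI := Ioo_subset_Icc_self hx
      have h := ((hBx x hxI s hsI).fun_mul (schwarz_ux x hx s hs)).const_mul 2
      have h2 : HasDerivAt (fun x => 2*((r x * uxx x s + κ x * uxxt x s) * uxt x s))
          (2*(Bx x s * uxt x s) + 2*((r x * uxx x s + κ x * uxxt x s) * uxxt x s)) x := by
        exact h.congr_deriv (by ring)
      exact h2.hasDerivWithinAt
    have hint : IntervalIntegrable (fun x => 2*(Bx x s * uxt x s) +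
        2*((r x * uxx x s + κ x * uxxt x s) * uxxt x s)) volume 0 ℓ := by
      apply ContinuousOn.intervalIntegrable
      rw [uIcc_of_le hl0]
      exact (continuousOn_const.mul ((sliceX (fun a b => Bx a b) cBx s hsI).mul
          (sliceX (fun a b => uxt a b) cuxt s hsI))).add
        (continuousOn_const.mul (((cr.mul (sliceX (fun a b => uxx a b) cuxx s hsI)).add
          (cκ.mul (sliceX (fun a b => uxxt a b) cuxxt s hsI))).mul
          (sliceX (fun a b => uxxt a b) cuxxt s hsI)))
    rw [intervalIntegral.integral_eq_sub_of_hasDeriv_right_of_le hl0 hcont hderiv hint]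
    rw [m0 s hsI, ml s hsI]
    ring
  have IBP3 : ∀ s ∈ Ioo (0:ℝ) T,
      (∫ x in (0:ℝ)..ℓ, (2*(Bxx x s * ut x s) + 2*(Bx x s * uxt x s))) = 0 := by
    intro s hs
    have hsI := Ioo_subset_Icc_self hs
    have hcont : ContinuousOn (fun x => 2*(Bx x s * ut x s)) (Icc 0 ℓ) :=
      continuousOn_const.mul ((sliceX (fun a b => Bx a b) cBx s hsI).mul
        (sliceX (fun a b => ut a b) cut s hsI))
    have hderiv : ∀ x ∈ Ioo (0:ℝ) ℓ, HasDerivWithinAt (fun x => 2*(Bx x s * ut x s))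
        (2*(Bxx x s * ut x s) + 2*(Bx x s * uxt x s)) (Ioi x) x := by
      intro x hx
      have hxI := Ioo_subset_Icc_self hx
      have h := ((hBxx x hxI s hsI).fun_mul (schwarz_u x hx s hs)).const_mul 2
      have h2 : HasDerivAt (fun x => 2*(Bx x s * ut x s))
          (2*(Bxx x s * ut x s) + 2*(Bx x s * uxt x s)) x := by
        exact h.congr_deriv (by ring)
      exact h2.hasDerivWithinAt
    have hint : IntervalIntegrable (fun x => 2*(Bxx x s * ut x s) + 2*(Bx x s * uxt x s))
        volume 0 ℓ := by
      apply ContinuousOn.intervalIntegrable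
      rw [uIcc_of_le hl0]
      exact (continuousOn_const.mul ((sliceX (fun a b => Bxx a b) cBxx s hsI).mul
          (sliceX (fun a b => ut a b) cut s hsI))).add
        (continuousOn_const.mul ((sliceX (fun a b => Bx a b) cBx s hsI).mul
          (sliceX (fun a b => uxt a b) cuxt s hsI)))
    rw [intervalIntegral.integral_eq_sub_of_hasDeriv_right_of_le hl0 hcont hderiv hint]
    rw [hut0 s hs, hutl s hs]
    ring
  -- the spatial energy identity
  have spatial : ∀ s ∈ Ioo (0:ℝ) T,
      (∫ x in (0:ℝ)..ℓ, (2*(ρA x * utt x s * ut x s) + 2*(Tr x * ux x s * uxt x s) +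
          (2*(r x * uxx x s * uxxt x s) + 2*(κ x * (uxxt x s)^2))))
        = ∫ x in (0:ℝ)..ℓ, (2*(F x s * ut x s) - 2*(μ x * (ut x s)^2)) := by
    intro s hs
    have hsI := Ioo_subset_Icc_self hs
    have h1 : ∀ x ∈ Ioo (0:ℝ) ℓ,
        2*(ρA x * utt x s * ut x s) + 2*(Tr x * ux x s * uxt x s) +
          (2*(r x * uxx x s * uxxt x s) + 2*(κ x * (uxxt x s)^2))
        = (2*(F x s * ut x s) - 2*(μ x * (ut x s)^2)) +
            ((2*(Ax x s * ut x s) + 2*(Tr x * ux x s * uxt x s)) +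
              ((2*(Bx x s * uxt x s) + 2*((r x * uxx x s + κ x * uxxt x s) * uxxt x s)) -
                (2*(Bxx x s * ut x s) + 2*(Bx x s * uxt x s)))) := by
      intro x hx
      have hp := pde x hx s hs
      linear_combination (2 * ut x s) * hp
    rw [intervalIntegral_congr_Ioo hl0 h1]
    have sl : ∀ (f : ℝ → ℝ → ℝ), ContinuousOn (fun p : ℝ × ℝ => f p.1 p.2) (Icc 0 ℓ ×ˢ Icc 0 T) →
        ContinuousOn (fun x => f x s) (Icc 0 ℓ) := fun f hf => sliceX f hf s hsI
    have hintP : IntervalIntegrable (fun x => 2*(F x s * ut x s) - 2*(μ x * (ut x s)^2))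
        volume 0 ℓ := by
      apply ContinuousOn.intervalIntegrable
      rw [uIcc_of_le hl0]
      exact (continuousOn_const.mul ((sl _ hF).mul (sl _ cut))).sub
        (continuousOn_const.mul (cμ.mul ((sl _ cut).pow 2)))
    have hintQ : IntervalIntegrable (fun x => 2*(Ax x s * ut x s) + 2*(Tr x * ux x s * uxt x s))
        volume 0 ℓ := by
      apply ContinuousOn.intervalIntegrable
      rw [uIcc_of_le hl0]
      exact (continuousOn_const.mul ((sl _ cAx).mul (sl _ cut))).add
        (continuousOn_const.mul ((cTr.mul (sl _ cux)).mul (sl _ cuxt)))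
    have hintR : IntervalIntegrable (fun x => 2*(Bx x s * uxt x s) +
        2*((r x * uxx x s + κ x * uxxt x s) * uxxt x s)) volume 0 ℓ := by
      apply ContinuousOn.intervalIntegrable
      rw [uIcc_of_le hl0]
      exact (continuousOn_const.mul ((sl _ cBx).mul (sl _ cuxt))).add
        (continuousOn_const.mul (((cr.mul (sl _ cuxx)).add (cκ.mul (sl _ cuxxt))).mul (sl _ cuxxt)))
    have hintS : IntervalIntegrable (fun x => 2*(Bxx x s * ut x s) + 2*(Bx x s * uxt x s))
        volume 0 ℓ := by
      apply ContinuousOn.intervalIntegrable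
      rw [uIcc_of_le hl0]
      exact (continuousOn_const.mul ((sl _ cBxx).mul (sl _ cut))).add
        (continuousOn_const.mul ((sl _ cBx).mul (sl _ cuxt)))
    rw [intervalIntegral.integral_add hintP (hintQ.add (hintR.sub hintS)),
      intervalIntegral.integral_add hintQ (hintR.sub hintS),
      intervalIntegral.integral_sub hintR hintS,
      IBP1 s hs, IBP2 s hs, IBP3 s hs]
    ring
  -- swap helper for continuity on the transposed rectangle
  have swapCont : ∀ (G : ℝ → ℝ → ℝ),
      ContinuousOn (fun p : ℝ × ℝ => G p.1 p.2) (Icc 0 ℓ ×ˢ Icc 0 T) → ∀ {t : ℝ}, t ∈ Icc (0:ℝ) T →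
      ContinuousOn (fun p : ℝ × ℝ => G p.2 p.1) (Icc 0 t ×ˢ Icc 0 ℓ) :=
    fun G hG t ht => hG.comp (continuous_snd.prodMk continuous_fst).continuousOn
      (fun p hp => ⟨hp.2, Icc_subset_Icc le_rfl ht.2 hp.1⟩)
  -- Fubini on the rectangle
  have fubini : ∀ (G : ℝ → ℝ → ℝ),
      ContinuousOn (fun p : ℝ × ℝ => G p.1 p.2) (Icc 0 ℓ ×ˢ Icc 0 T) → ∀ t ∈ Icc (0:ℝ) T,
      (∫ s in (0:ℝ)..t, ∫ x in (0:ℝ)..ℓ, G x s) = ∫ x in (0:ℝ)..ℓ, ∫ s in (0:ℝ)..t, G x s := by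
    intro G hG t ht
    have hIG : IntegrableOn (fun p : ℝ × ℝ => G p.2 p.1) (Ioc 0 t ×ˢ Ioc 0 ℓ) volume :=
      ((swapCont G hG ht).integrableOn_compact (isCompact_Icc.prod isCompact_Icc)).mono_set
        (prod_mono Ioc_subset_Icc_self Ioc_subset_Icc_self)
    have key : Integrable (Function.uncurry fun s x => G x s)
        ((volume.restrict (Ioc (0:ℝ) t)).prod (volume.restrict (Ioc (0:ℝ) ℓ))) := by
      rw [Measure.prod_restrict, ← Measure.volume_eq_prod]
      exact hIG
    rw [intervalIntegral.integral_of_le ht.1, intervalIntegral.integral_of_le hl0]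
    simp_rw [intervalIntegral.integral_of_le hl0, intervalIntegral.integral_of_le ht.1]
    exact integral_integral_swap key
  -- the energy integral inequality
  have energy : ∀ t ∈ Icc (0:ℝ) T,
      (∫ x in (0:ℝ)..ℓ, (ρA x * (ut x t)^2 + Tr x * (ux x t)^2 + r x * (uxx x t)^2))
        ≤ ∫ s in (0:ℝ)..t, ((∫ x in (0:ℝ)..ℓ, (F x s)^2) +
            (1/ρ₀) * ∫ x in (0:ℝ)..ℓ, (ρA x * (ut x s)^2 + Tr x * (ux x s)^2 + r x * (uxx x s)^2)) := by
    intro t ht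
    rw [hEt t ht]
    have intWs : ∀ x ∈ Icc (0:ℝ) ℓ, IntervalIntegrable (fun s =>
        2*(ρA x * utt x s * ut x s) + 2*(Tr x * ux x s * uxt x s) +
          (2*(r x * uxx x s * uxxt x s) + 2*(κ x * (uxxt x s)^2))) volume 0 t := by
      intro x hx
      apply ContinuousOn.intervalIntegrable
      rw [uIcc_of_le ht.1]
      exact (sliceT (fun x s => 2*(ρA x * utt x s * ut x s) + 2*(Tr x * ux x s * uxt x s) +
        (2*(r x * uxx x s * uxxt x s) + 2*(κ x * (uxxt x s)^2))) cW x hx).mono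
        (Icc_subset_Icc le_rfl ht.2)
    have intQs : ∀ x ∈ Icc (0:ℝ) ℓ, IntervalIntegrable (fun s => 2*(κ x * (uxxt x s)^2))
        volume 0 t := by
      intro x hx
      apply ContinuousOn.intervalIntegrable
      rw [uIcc_of_le ht.1]
      exact (sliceT (fun x s => 2*(κ x * (uxxt x s)^2)) cQ x hx).mono (Icc_subset_Icc le_rfl ht.2)
    have hsplit : ∀ x ∈ Ioo (0:ℝ) ℓ,
        (∫ s in (0:ℝ)..t, (2*(ρA x * utt x s * ut x s) + 2*(Tr x * ux x s * uxt x s) +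
          (2*(r x * uxx x s * uxxt x s) + 2*(κ x * (uxxt x s)^2)) - 2*(κ x * (uxxt x s)^2)))
        = (∫ s in (0:ℝ)..t, (2*(ρA x * utt x s * ut x s) + 2*(Tr x * ux x s * uxt x s) +
            (2*(r x * uxx x s * uxxt x s) + 2*(κ x * (uxxt x s)^2))))
          - ∫ s in (0:ℝ)..t, (2*(κ x * (uxxt x s)^2)) := by
      intro x hx
      exact intervalIntegral.integral_sub (intWs x (Ioo_subset_Icc_self hx))
        (intQs x (Ioo_subset_Icc_self hx))
    rw [intervalIntegral_congr_Ioo hl0 hsplit]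
    have hAcont : ContinuousOn (fun x => ∫ s in (0:ℝ)..t,
        (2*(ρA x * utt x s * ut x s) + 2*(Tr x * ux x s * uxt x s) +
          (2*(r x * uxx x s * uxxt x s) + 2*(κ x * (uxxt x s)^2)))) (Icc 0 ℓ) :=
      continuousOn_param ht.1 (swapCont (fun a b => 2*(ρA a * utt a b * ut a b) +
        2*(Tr a * ux a b * uxt a b) + (2*(r a * uxx a b * uxxt a b) + 2*(κ a * (uxxt a b)^2)))
        cW ht)
    have hBcont : ContinuousOn (fun x => ∫ s in (0:ℝ)..t, (2*(κ x * (uxxt x s)^2))) (Icc 0 ℓ) :=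
      continuousOn_param ht.1 (swapCont (fun a b => 2*(κ a * (uxxt a b)^2)) cQ ht)
    have hintA : IntervalIntegrable (fun x => ∫ s in (0:ℝ)..t,
        (2*(ρA x * utt x s * ut x s) + 2*(Tr x * ux x s * uxt x s) +
          (2*(r x * uxx x s * uxxt x s) + 2*(κ x * (uxxt x s)^2)))) volume 0 ℓ := by
      apply ContinuousOn.intervalIntegrable
      rwa [uIcc_of_le hl0]
    have hintB : IntervalIntegrable (fun x => ∫ s in (0:ℝ)..t, (2*(κ x * (uxxt x s)^2)))
        volume 0 ℓ := by
      apply ContinuousOn.intervalIntegrable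
      rwa [uIcc_of_le hl0]
    rw [intervalIntegral.integral_sub hintA hintB]
    have hBnn : 0 ≤ ∫ x in (0:ℝ)..ℓ, ∫ s in (0:ℝ)..t, (2*(κ x * (uxxt x s)^2)) := by
      apply intervalIntegral.integral_nonneg hl0
      intro x hx
      apply intervalIntegral.integral_nonneg ht.1
      intro s hs
      nlinarith [hκb x hx, sq_nonneg (uxxt x s)]
    have main : (∫ x in (0:ℝ)..ℓ, ∫ s in (0:ℝ)..t,
        (2*(ρA x * utt x s * ut x s) + 2*(Tr x * ux x s * uxt x s) +
          (2*(r x * uxx x s * uxxt x s) + 2*(κ x * (uxxt x s)^2))))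
        ≤ ∫ s in (0:ℝ)..t, ((∫ x in (0:ℝ)..ℓ, (F x s)^2) +
            (1/ρ₀) * ∫ x in (0:ℝ)..ℓ, (ρA x * (ut x s)^2 + Tr x * (ux x s)^2 + r x * (uxx x s)^2)) := by
      rw [← fubini _ cW t ht]
      have int1 : IntervalIntegrable (fun s => ∫ x in (0:ℝ)..ℓ,
          (2*(ρA x * utt x s * ut x s) + 2*(Tr x * ux x s * uxt x s) +
            (2*(r x * uxx x s * uxxt x s) + 2*(κ x * (uxxt x s)^2)))) volume 0 t := by
        apply ContinuousOn.intervalIntegrable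
        rw [uIcc_of_le ht.1]
        exact (continuousOn_param hl0 cW).mono (Icc_subset_Icc le_rfl ht.2)
      have int2 : IntervalIntegrable (fun s => (∫ x in (0:ℝ)..ℓ, (F x s)^2) +
          (1/ρ₀) * ∫ x in (0:ℝ)..ℓ, (ρA x * (ut x s)^2 + Tr x * (ux x s)^2 + r x * (uxx x s)^2))
          volume 0 t := by
        apply ContinuousOn.intervalIntegrable
        rw [uIcc_of_le ht.1]
        exact ((continuousOn_param hl0 cF2).add
          ((continuousOn_param hl0 cEd).const_smul (1/ρ₀) : ContinuousOn _ _)).mono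
          (Icc_subset_Icc le_rfl ht.2)
      apply intervalIntegral_mono_Ioo ht.1 int1 int2
      intro s hs'
      have hs : s ∈ Ioo (0:ℝ) T := ⟨hs'.1, lt_of_lt_of_le hs'.2 ht.2⟩
      have hsI := Ioo_subset_Icc_self hs
      rw [spatial s hs]
      have intP : IntervalIntegrable (fun x => 2*(F x s * ut x s) - 2*(μ x * (ut x s)^2))
          volume 0 ℓ := by
        apply ContinuousOn.intervalIntegrable
        rw [uIcc_of_le hl0]
        exact (continuousOn_const.mul ((sliceX (fun a b => F a b) hF s hsI).mul
            (sliceX (fun a b => ut a b) cut s hsI))).sub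
          (continuousOn_const.mul (cμ.mul ((sliceX (fun a b => ut a b) cut s hsI).pow 2)))
      have intF2s : IntervalIntegrable (fun x => (F x s)^2) volume 0 ℓ := by
        apply ContinuousOn.intervalIntegrable
        rw [uIcc_of_le hl0]
        exact (sliceX (fun a b => F a b) hF s hsI).pow 2
      have intEds : IntervalIntegrable (fun x =>
          ρA x * (ut x s)^2 + Tr x * (ux x s)^2 + r x * (uxx x s)^2) volume 0 ℓ := by
        apply ContinuousOn.intervalIntegrable
        rw [uIcc_of_le hl0]
        exact sliceX (fun a b => ρA a * (ut a b)^2 + Tr a * (ux a b)^2 + r a * (uxx a b)^2) cEd s hsI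
      have hmono : (∫ x in (0:ℝ)..ℓ, (2*(F x s * ut x s) - 2*(μ x * (ut x s)^2)))
          ≤ ∫ x in (0:ℝ)..ℓ, ((F x s)^2 +
              (1/ρ₀) * (ρA x * (ut x s)^2 + Tr x * (ux x s)^2 + r x * (uxx x s)^2)) := by
        apply intervalIntegral.integral_mono_on hl0 intP (intF2s.add (intEds.const_mul (1/ρ₀)))
        intro x hx
        have h1 := hρAb x hx
        have h2 := hμb x hx
        have h3 := hTrb x hx
        have h4 := hrb x hx
        have hρinv : (1/ρ₀) * ρ₀ = 1 := by field_simp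
        have hinv : (0:ℝ) ≤ 1/ρ₀ := by positivity
        nlinarith [sq_nonneg (F x s - ut x s), mul_nonneg h2 (sq_nonneg (ut x s)),
          mul_nonneg h3 (sq_nonneg (ux x s)),
          mul_nonneg (mul_nonneg hinv (by linarith : (0:ℝ) ≤ ρA x - ρ₀)) (sq_nonneg (ut x s)),
          mul_nonneg (by linarith : (0:ℝ) ≤ r x) (sq_nonneg (uxx x s))]
      calc (∫ x in (0:ℝ)..ℓ, (2*(F x s * ut x s) - 2*(μ x * (ut x s)^2)))
          ≤ ∫ x in (0:ℝ)..ℓ, ((F x s)^2 +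
              (1/ρ₀) * (ρA x * (ut x s)^2 + Tr x * (ux x s)^2 + r x * (uxx x s)^2)) := hmono
        _ = (∫ x in (0:ℝ)..ℓ, (F x s)^2) + (1/ρ₀) * ∫ x in (0:ℝ)..ℓ,
              (ρA x * (ut x s)^2 + Tr x * (ux x s)^2 + r x * (uxx x s)^2) := by
            rw [intervalIntegral.integral_add intF2s (intEds.const_mul (1/ρ₀)),
              intervalIntegral.integral_const_mul]
    linarith
  -- continuity of the energy and source integrals in time
  have hEcont : ContinuousOn (fun t => ∫ x in (0:ℝ)..ℓ,
      (ρA x * (ut x t)^2 + Tr x * (ux x t)^2 + r x * (uxx x t)^2)) (Icc 0 T) :=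
    continuousOn_param hl0 cEd
  have hgcont : ContinuousOn (fun s => ∫ x in (0:ℝ)..ℓ, (F x s)^2) (Icc 0 T) :=
    continuousOn_param hl0 cF2
  have hEnn : ∀ t : ℝ, 0 ≤ ∫ x in (0:ℝ)..ℓ,
      (ρA x * (ut x t)^2 + Tr x * (ux x t)^2 + r x * (uxx x t)^2) := by
    intro t
    apply intervalIntegral.integral_nonneg hl0
    intro x hx
    nlinarith [hρAb x hx, hTrb x hx, hrb x hx, sq_nonneg (ut x t), sq_nonneg (ux x t),
      sq_nonneg (uxx x t)]
  have hgnn : ∀ s : ℝ, 0 ≤ ∫ x in (0:ℝ)..ℓ, (F x s)^2 :=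
    fun s => intervalIntegral.integral_nonneg hl0 (fun x _ => sq_nonneg _)
  have hgsub : ∀ t ∈ Icc (0:ℝ) T,
      (∫ s in (0:ℝ)..t, ∫ x in (0:ℝ)..ℓ, (F x s)^2)
        ≤ ∫ s in (0:ℝ)..T, ∫ x in (0:ℝ)..ℓ, (F x s)^2 := by
    intro t ht
    have h1 : IntervalIntegrable (fun s => ∫ x in (0:ℝ)..ℓ, (F x s)^2) volume 0 t := by
      apply ContinuousOn.intervalIntegrable
      rw [uIcc_of_le ht.1]
      exact hgcont.mono (Icc_subset_Icc le_rfl ht.2)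
    have h2 : IntervalIntegrable (fun s => ∫ x in (0:ℝ)..ℓ, (F x s)^2) volume t T := by
      apply ContinuousOn.intervalIntegrable
      rw [uIcc_of_le ht.2]
      exact hgcont.mono (Icc_subset_Icc ht.1 le_rfl)
    have hadd := intervalIntegral.integral_add_adjacent_intervals h1 h2
    have h3 : 0 ≤ ∫ s in t..T, ∫ x in (0:ℝ)..ℓ, (F x s)^2 :=
      intervalIntegral.integral_nonneg ht.2 (fun s _ => hgnn s)
    linarith
  -- clamped energy function and its primitive
  have hclamp : Continuous (fun τ : ℝ => max 0 (min τ T)) :=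
    continuous_const.max (continuous_id.min continuous_const)
  have hclampmem : ∀ τ : ℝ, max 0 (min τ T) ∈ Icc (0:ℝ) T :=
    fun τ => ⟨le_max_left _ _, max_le hT0 (min_le_right _ _)⟩
  have hclampid : ∀ t ∈ Icc (0:ℝ) T, max 0 (min t T) = t := by
    intro t ht
    rw [min_eq_left ht.2, max_eq_right ht.1]
  have Ec : Continuous (fun τ : ℝ => ∫ x in (0:ℝ)..ℓ,
      (ρA x * (ut x (max 0 (min τ T)))^2 + Tr x * (ux x (max 0 (min τ T)))^2 +
        r x * (uxx x (max 0 (min τ T)))^2)) :=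
    hEcont.comp_continuous hclamp hclampmem
  have hΦderiv : ∀ τ : ℝ, HasDerivAt (fun w => ∫ s in (0:ℝ)..w, (∫ x in (0:ℝ)..ℓ,
      (ρA x * (ut x (max 0 (min s T)))^2 + Tr x * (ux x (max 0 (min s T)))^2 +
        r x * (uxx x (max 0 (min s T)))^2)))
      (∫ x in (0:ℝ)..ℓ, (ρA x * (ut x (max 0 (min τ T)))^2 + Tr x * (ux x (max 0 (min τ T)))^2 +
        r x * (uxx x (max 0 (min τ T)))^2)) τ :=
    fun τ => intervalIntegral.integral_hasDerivAt_right (Ec.intervalIntegrable _ _)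
      (Ec.stronglyMeasurableAtFilter _ _) Ec.continuousAt
  have hΦcont : ContinuousOn (fun w => ∫ s in (0:ℝ)..w, (∫ x in (0:ℝ)..ℓ,
      (ρA x * (ut x (max 0 (min s T)))^2 + Tr x * (ux x (max 0 (min s T)))^2 +
        r x * (uxx x (max 0 (min s T)))^2))) (Icc 0 T) :=
    (continuous_iff_continuousAt.2 fun τ => (hΦderiv τ).continuousAt).continuousOn
  have hΦeq : ∀ t ∈ Icc (0:ℝ) T, (∫ s in (0:ℝ)..t, (∫ x in (0:ℝ)..ℓ,
      (ρA x * (ut x (max 0 (min s T)))^2 + Tr x * (ux x (max 0 (min s T)))^2 +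
        r x * (uxx x (max 0 (min s T)))^2)))
      = ∫ s in (0:ℝ)..t, (∫ x in (0:ℝ)..ℓ,
        (ρA x * (ut x s)^2 + Tr x * (ux x s)^2 + r x * (uxx x s)^2)) := by
    intro t ht
    apply intervalIntegral.integral_congr
    intro s hs
    rw [uIcc_of_le ht.1] at hs
    simp only
    rw [hclampid s ⟨hs.1, le_trans hs.2 ht.2⟩]
  have hΦnn : ∀ t ∈ Icc (0:ℝ) T, 0 ≤ ∫ s in (0:ℝ)..t, (∫ x in (0:ℝ)..ℓ,
      (ρA x * (ut x (max 0 (min s T)))^2 + Tr x * (ux x (max 0 (min s T)))^2 +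
        r x * (uxx x (max 0 (min s T)))^2)) :=
    fun t ht => intervalIntegral.integral_nonneg ht.1 (fun s _ => hEnn _)
  -- the key pre-Gronwall bound  E t ≤ C + (1/ρ₀) Φ t
  have Ebound : ∀ t ∈ Icc (0:ℝ) T,
      (∫ x in (0:ℝ)..ℓ, (ρA x * (ut x t)^2 + Tr x * (ux x t)^2 + r x * (uxx x t)^2))
        ≤ (∫ s in (0:ℝ)..T, ∫ x in (0:ℝ)..ℓ, (F x s)^2) +
          (1/ρ₀) * ∫ s in (0:ℝ)..t, (∫ x in (0:ℝ)..ℓ,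
            (ρA x * (ut x (max 0 (min s T)))^2 + Tr x * (ux x (max 0 (min s T)))^2 +
              r x * (uxx x (max 0 (min s T)))^2)) := by
    intro t ht
    have h1 := energy t ht
    have hgi : IntervalIntegrable (fun s => ∫ x in (0:ℝ)..ℓ, (F x s)^2) volume 0 t := by
      apply ContinuousOn.intervalIntegrable
      rw [uIcc_of_le ht.1]
      exact hgcont.mono (Icc_subset_Icc le_rfl ht.2)
    have hEi : IntervalIntegrable (fun s => ∫ x in (0:ℝ)..ℓ,
        (ρA x * (ut x s)^2 + Tr x * (ux x s)^2 + r x * (uxx x s)^2)) volume 0 t := by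
      apply ContinuousOn.intervalIntegrable
      rw [uIcc_of_le ht.1]
      exact hEcont.mono (Icc_subset_Icc le_rfl ht.2)
    rw [intervalIntegral.integral_add hgi (hEi.const_mul (1/ρ₀)),
      intervalIntegral.integral_const_mul] at h1
    have h2 := hgsub t ht
    have h3 := hΦeq t ht
    have hinv : (0:ℝ) ≤ 1/ρ₀ := by positivity
    rw [h3]
    linarith
  -- Gronwall
  have hKne : (1/ρ₀ : ℝ) ≠ 0 := by positivity
  have bound : ∀ t ∈ Ico (0:ℝ) T, ‖(∫ x in (0:ℝ)..ℓ,
      (ρA x * (ut x (max 0 (min t T)))^2 + Tr x * (ux x (max 0 (min t T)))^2 +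
        r x * (uxx x (max 0 (min t T)))^2))‖
      ≤ (1/ρ₀) * ‖∫ s in (0:ℝ)..t, (∫ x in (0:ℝ)..ℓ,
          (ρA x * (ut x (max 0 (min s T)))^2 + Tr x * (ux x (max 0 (min s T)))^2 +
            r x * (uxx x (max 0 (min s T)))^2))‖ +
        (∫ s in (0:ℝ)..T, ∫ x in (0:ℝ)..ℓ, (F x s)^2) := by
    intro t ht'
    have ht : t ∈ Icc (0:ℝ) T := ⟨ht'.1, ht'.2.le⟩
    rw [hclampid t ht, Real.norm_eq_abs, Real.norm_eq_abs, abs_of_nonneg (hEnn t),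
      abs_of_nonneg (hΦnn t ht)]
    have h := Ebound t ht
    linarith
  have gron := norm_le_gronwallBound_of_norm_deriv_right_le (δ := 0) (K := 1/ρ₀)
    (ε := ∫ s in (0:ℝ)..T, ∫ x in (0:ℝ)..ℓ, (F x s)^2) hΦcont
    (fun t _ => (hΦderiv t).hasDerivWithinAt) (by simp) bound
  -- pointwise curvature bound
  have curv : ∀ t ∈ Icc (0:ℝ) T, (∫ x in (0:ℝ)..ℓ, (uxx x t)^2)
      ≤ ((1/r₀) * (∫ s in (0:ℝ)..T, ∫ x in (0:ℝ)..ℓ, (F x s)^2)) * Real.exp (t/ρ₀) := by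
    intro t ht
    have h := gron t ht
    rw [Real.norm_eq_abs, abs_of_nonneg (hΦnn t ht)] at h
    simp only [gronwallBound_of_K_ne_0 hKne] at h
    have e1 : 1/ρ₀ * (t - 0) = t/ρ₀ := by ring
    rw [e1] at h
    have e2 : (∫ s in (0:ℝ)..T, ∫ x in (0:ℝ)..ℓ, (F x s)^2) / (1/ρ₀)
        = ρ₀ * (∫ s in (0:ℝ)..T, ∫ x in (0:ℝ)..ℓ, (F x s)^2) := by
      rw [div_div_eq_mul_div, div_one, mul_comm]
    rw [e2] at h
    -- h : Φ t ≤ 0 * exp (t/ρ₀) + ρ₀ * C * (exp (t/ρ₀) - 1)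
    have hr1 : r₀ * (∫ x in (0:ℝ)..ℓ, (uxx x t)^2)
        ≤ ∫ x in (0:ℝ)..ℓ, (ρA x * (ut x t)^2 + Tr x * (ux x t)^2 + r x * (uxx x t)^2) := by
      rw [← intervalIntegral.integral_const_mul]
      have int1 : IntervalIntegrable (fun x => r₀ * (uxx x t)^2) volume 0 ℓ := by
        apply ContinuousOn.intervalIntegrable
        rw [uIcc_of_le hl0]
        exact continuousOn_const.mul ((sliceX (fun a b => uxx a b) cuxx t ht).pow 2)
      have int2 : IntervalIntegrable (fun x =>
          ρA x * (ut x t)^2 + Tr x * (ux x t)^2 + r x * (uxx x t)^2) volume 0 ℓ := by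
        apply ContinuousOn.intervalIntegrable
        rw [uIcc_of_le hl0]
        exact sliceX (fun a b => ρA a * (ut a b)^2 + Tr a * (ux a b)^2 + r a * (uxx a b)^2) cEd t ht
      apply intervalIntegral.integral_mono_on hl0 int1 int2
      intro x hx
      nlinarith [hρAb x hx, hTrb x hx, hrb x hx,
        sq_nonneg (ut x t), sq_nonneg (ux x t), sq_nonneg (uxx x t),
        mul_nonneg (by linarith [hrb x hx] : (0:ℝ) ≤ r x - r₀) (sq_nonneg (uxx x t)),
        mul_nonneg (by linarith [hρAb x hx] : (0:ℝ) ≤ ρA x) (sq_nonneg (ut x t)),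
        mul_nonneg (hTrb x hx) (sq_nonneg (ux x t))]
    have h2 := Ebound t ht
    have hinv : (0:ℝ) ≤ 1/ρ₀ := by positivity
    have h3 := mul_le_mul_of_nonneg_left h hinv
    have e3 : (1/ρ₀) * (0 * Real.exp (t/ρ₀) + ρ₀ * (∫ s in (0:ℝ)..T, ∫ x in (0:ℝ)..ℓ, (F x s)^2) *
        (Real.exp (t/ρ₀) - 1))
        = (∫ s in (0:ℝ)..T, ∫ x in (0:ℝ)..ℓ, (F x s)^2) * (Real.exp (t/ρ₀) - 1) := by
      have hne : ρ₀ ≠ 0 := ne_of_gt hρ₀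
      field_simp
      ring
    rw [e3] at h3
    -- now E t ≤ C + C*(exp - 1) = C * exp
    have h4 : r₀ * (∫ x in (0:ℝ)..ℓ, (uxx x t)^2)
        ≤ (∫ s in (0:ℝ)..T, ∫ x in (0:ℝ)..ℓ, (F x s)^2) * Real.exp (t/ρ₀) := by
      nlinarith [hr1, h2, h3]
    have h5 := mul_le_mul_of_nonneg_left h4 (by positivity : (0:ℝ) ≤ 1/r₀)
    have h6 : (1/r₀) * (r₀ * (∫ x in (0:ℝ)..ℓ, (uxx x t)^2))
        = ∫ x in (0:ℝ)..ℓ, (uxx x t)^2 := by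
      field_simp
    rw [h6] at h5
    calc (∫ x in (0:ℝ)..ℓ, (uxx x t)^2)
        ≤ (1/r₀) * ((∫ s in (0:ℝ)..T, ∫ x in (0:ℝ)..ℓ, (F x s)^2) * Real.exp (t/ρ₀)) := h5
      _ = ((1/r₀) * (∫ s in (0:ℝ)..T, ∫ x in (0:ℝ)..ℓ, (F x s)^2)) * Real.exp (t/ρ₀) := by ring
  -- integrate the curvature bound in time
  have intLHS : IntervalIntegrable (fun t => ∫ x in (0:ℝ)..ℓ, (uxx x t)^2) volume 0 T := by
    apply ContinuousOn.intervalIntegrable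
    rw [uIcc_of_le hT0]
    exact continuousOn_param hl0 cuxx2
  have intRHS : IntervalIntegrable (fun t =>
      ((1/r₀) * (∫ s in (0:ℝ)..T, ∫ x in (0:ℝ)..ℓ, (F x s)^2)) * Real.exp (t/ρ₀)) volume 0 T := by
    apply Continuous.intervalIntegrable
    exact continuous_const.mul (Real.continuous_exp.comp (continuous_id.div_const ρ₀))
  have hstep := intervalIntegral.integral_mono_on hT0 intLHS intRHS curv
  have hexp : (∫ t in (0:ℝ)..T, Real.exp (t/ρ₀)) = ρ₀ * (Real.exp (T/ρ₀) - 1) := by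
    have hd : ∀ t ∈ uIcc (0:ℝ) T, HasDerivAt (fun τ => ρ₀ * Real.exp (τ/ρ₀))
        (Real.exp (t/ρ₀)) t := by
      intro t _
      have h1 : HasDerivAt (fun τ : ℝ => τ/ρ₀) (1/ρ₀) t := (hasDerivAt_id t).div_const ρ₀
      have h2 := (h1.exp).const_mul ρ₀
      have e : ρ₀ * (Real.exp (t/ρ₀) * (1/ρ₀)) = Real.exp (t/ρ₀) := by
        field_simp
      rw [e] at h2
      exact h2
    rw [intervalIntegral.integral_eq_sub_of_hasDerivAt hd
      ((Real.continuous_exp.comp (continuous_id.div_const ρ₀)).intervalIntegrable _ _)]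
    rw [zero_div, Real.exp_zero]
    ring
  rw [intervalIntegral.integral_const_mul, hexp] at hstep
  calc (∫ t in (0:ℝ)..T, ∫ x in (0:ℝ)..ℓ, (uxx x t)^2)
      ≤ (1/r₀) * (∫ s in (0:ℝ)..T, ∫ x in (0:ℝ)..ℓ, (F x s)^2) * (ρ₀ * (Real.exp (T/ρ₀) - 1)) :=
        hstep
    _ = (ρ₀ / r₀) * (Real.exp (T / ρ₀) - 1) * (∫ t in (0:ℝ)..T, ∫ x in (0:ℝ)..ℓ, (F x t)^2) := by
        ring
end

section
/- Let u be a classical solution of the forward problem, and write ‖F‖² := ∫₀^T ∫₀^ℓ F(x,t)² dx dt. Then the Kelvin–Voigt dissipation estimate 2κ₀ ∫₀^T ∫₀^ℓ (∂ₓₓ∂ₜu(x,t))² dx dt ≤ C_e² ‖F‖² holds, where C_e² := exp(T/ρ₀). -/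
open Set

open Filter Topology MeasureTheory intervalIntegral

private lemma hasDerivAt_slice_x {U : ℝ × ℝ → ℝ} {f' : (ℝ × ℝ) →L[ℝ] ℝ} {x t : ℝ}
    (h : HasFDerivAt U f' (x, t)) :
    HasDerivAt (fun y => U (y, t)) (f' (1, 0)) x := by
  have hγ : HasDerivAt (fun y : ℝ => (y, t)) ((1 : ℝ), (0 : ℝ)) x :=
    (hasDerivAt_id x).prodMk (hasDerivAt_const x t)
  exact h.comp_hasDerivAt x hγ

private lemma hasDerivAt_slice_t {U : ℝ × ℝ → ℝ} {f' : (ℝ × ℝ) →L[ℝ] ℝ} {x t : ℝ}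
    (h : HasFDerivAt U f' (x, t)) :
    HasDerivAt (fun s => U (x, s)) (f' (0, 1)) t := by
  have hγ : HasDerivAt (fun s : ℝ => (x, s)) ((0 : ℝ), (1 : ℝ)) t :=
    (hasDerivAt_const t x).prodMk (hasDerivAt_id t)
  exact h.comp_hasDerivAt t hγ

private lemma fderiv_eq_wx {W wx : ℝ → ℝ → ℝ} {O : Set (ℝ × ℝ)} (hO : IsOpen O)
    (hW : ContDiffOn ℝ (⊤ : ℕ∞) (fun p : ℝ × ℝ => W p.1 p.2) O)
    (hwx : ∀ p ∈ O, HasDerivAt (fun y => W y p.2) (wx p.1 p.2) p.1) :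
    ∀ p ∈ O, wx p.1 p.2 = fderiv ℝ (fun p : ℝ × ℝ => W p.1 p.2) p (1, 0) := by
  intro p hp
  have hd : HasFDerivAt (fun p : ℝ × ℝ => W p.1 p.2)
      (fderiv ℝ (fun p : ℝ × ℝ => W p.1 p.2) p) p :=
    (((hW.contDiffAt (hO.mem_nhds hp)).differentiableAt (by simp))).hasFDerivAt
  have h1 := hasDerivAt_slice_x (x := p.1) (t := p.2) (by simpa using hd)
  exact (hwx ⟨p.1, p.2⟩ (by simpa using hp)).unique h1

private lemma fderiv_eq_wt {W wt : ℝ → ℝ → ℝ} {O : Set (ℝ × ℝ)} (hO : IsOpen O)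
    (hW : ContDiffOn ℝ (⊤ : ℕ∞) (fun p : ℝ × ℝ => W p.1 p.2) O)
    (hwt : ∀ p ∈ O, HasDerivAt (fun s => W p.1 s) (wt p.1 p.2) p.2) :
    ∀ p ∈ O, wt p.1 p.2 = fderiv ℝ (fun p : ℝ × ℝ => W p.1 p.2) p (0, 1) := by
  intro p hp
  have hd : HasFDerivAt (fun p : ℝ × ℝ => W p.1 p.2)
      (fderiv ℝ (fun p : ℝ × ℝ => W p.1 p.2) p) p :=
    (((hW.contDiffAt (hO.mem_nhds hp)).differentiableAt (by simp))).hasFDerivAt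
  have h1 := hasDerivAt_slice_t (x := p.1) (t := p.2) (by simpa using hd)
  exact (hwt ⟨p.1, p.2⟩ (by simpa using hp)).unique h1

/-- smoothness of a partial derivative on an open set -/
private lemma d1_smooth {W wx : ℝ → ℝ → ℝ} {O : Set (ℝ × ℝ)} (hO : IsOpen O)
    (hW : ContDiffOn ℝ (⊤ : ℕ∞) (fun p : ℝ × ℝ => W p.1 p.2) O)
    (hwx : ∀ p ∈ O, HasDerivAt (fun y => W y p.2) (wx p.1 p.2) p.1) :
    ContDiffOn ℝ (⊤ : ℕ∞) (fun p : ℝ × ℝ => wx p.1 p.2) O := by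
  have hf' : ContDiffOn ℝ (⊤ : ℕ∞) (fderiv ℝ (fun p : ℝ × ℝ => W p.1 p.2)) O :=
    hW.fderiv_of_isOpen hO (by simp)
  have : ContDiffOn ℝ (⊤ : ℕ∞)
      (fun p : ℝ × ℝ => fderiv ℝ (fun p : ℝ × ℝ => W p.1 p.2) p (1, 0)) O :=
    hf'.clm_apply contDiffOn_const
  exact this.congr (fderiv_eq_wx hO hW hwx)

/-- symmetry of second derivatives, in the form needed below -/
private lemma clairaut_aux {W wx wt : ℝ → ℝ → ℝ} {O : Set (ℝ × ℝ)} (hO : IsOpen O)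
    (hW : ContDiffOn ℝ (⊤ : ℕ∞) (fun p : ℝ × ℝ => W p.1 p.2) O)
    (hwx : ∀ p ∈ O, HasDerivAt (fun y => W y p.2) (wx p.1 p.2) p.1)
    (hwt : ∀ p ∈ O, HasDerivAt (fun s => W p.1 s) (wt p.1 p.2) p.2)
    {x t c : ℝ} (hp : (x, t) ∈ O) (hc : HasDerivAt (fun s => wx x s) c t) :
    HasDerivAt (fun y => wt y t) c x := by
  set U : ℝ × ℝ → ℝ := fun p => W p.1 p.2 with hUdef
  have hdiff : ∀ p ∈ O, HasFDerivAt U (fderiv ℝ U p) p := fun p hp =>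
    ((hW.contDiffAt (hO.mem_nhds hp)).differentiableAt (by simp)).hasFDerivAt
  have hf' : ContDiffOn ℝ (⊤ : ℕ∞) (fderiv ℝ U) O := hW.fderiv_of_isOpen hO (by simp)
  have hU2 : DifferentiableAt ℝ (fderiv ℝ U) (x, t) :=
    (hf'.contDiffAt (hO.mem_nhds hp)).differentiableAt (by simp)
  set f'' := fderiv ℝ (fderiv ℝ U) (x, t) with hf''def
  have hsymm : ∀ v w, f'' v w = f'' w v := by
    intro v w
    exact second_derivative_symmetric_of_eventually
      (Filter.eventually_of_mem (hO.mem_nhds hp) hdiff) hU2.hasFDerivAt v w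
  have keyd : ∀ v : ℝ × ℝ, HasFDerivAt (fun p => fderiv ℝ U p v)
      ((ContinuousLinearMap.apply ℝ ℝ v).comp f'') (x, t) := fun v =>
    (ContinuousLinearMap.apply ℝ ℝ v).hasFDerivAt.comp _ hU2.hasFDerivAt
  have key1 : HasDerivAt (fun s => fderiv ℝ U (x, s) (1, 0)) (f'' (0, 1) (1, 0)) t := by
    simpa using hasDerivAt_slice_t (keyd (1, 0))
  have key2 : HasDerivAt (fun y => fderiv ℝ U (y, t) (0, 1)) (f'' (1, 0) (0, 1)) x := by
    simpa using hasDerivAt_slice_x (keyd (0, 1))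
  have heq1 : (fun s => fderiv ℝ U (x, s) (1, 0)) =ᶠ[𝓝 t] fun s => wx x s := by
    have hnb : {s : ℝ | (x, s) ∈ O} ∈ 𝓝 t :=
      (hO.preimage (Continuous.prodMk_right x)).mem_nhds hp
    exact Filter.eventually_of_mem hnb fun s hs =>
      (fderiv_eq_wx hO hW hwx (x, s) hs).symm
  have hc' : HasDerivAt (fun s => wx x s) (f'' (0, 1) (1, 0)) t :=
    key1.congr_of_eventuallyEq heq1.symm
  have hcc : c = f'' (1, 0) (0, 1) := by rw [hc.unique hc']; exact (hsymm _ _).symm ▸ rfl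
  have heq2 : (fun y => fderiv ℝ U (y, t) (0, 1)) =ᶠ[𝓝 x] fun y => wt y t := by
    have hnb : {y : ℝ | (y, t) ∈ O} ∈ 𝓝 x := by
      have : Continuous fun y : ℝ => (y, t) := by fun_prop
      exact (hO.preimage this).mem_nhds hp
    exact Filter.eventually_of_mem hnb fun y hy =>
      (fderiv_eq_wt hO hW hwt (y, t) hy).symm
  have := key2.congr_of_eventuallyEq heq2.symm
  rwa [← hcc] at this

private lemma sect_contX {ℓ T : ℝ} {h : ℝ → ℝ → ℝ}
    (hcont : ContinuousOn (fun p : ℝ × ℝ => h p.1 p.2) (Icc 0 ℓ ×ˢ Icc 0 T))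
    {t : ℝ} (ht : t ∈ Icc (0:ℝ) T) : ContinuousOn (fun x => h x t) (Icc 0 ℓ) :=
  hcont.comp (Continuous.continuousOn (by fun_prop)) fun x hx => mk_mem_prod hx ht

private lemma sect_contT {ℓ T : ℝ} {h : ℝ → ℝ → ℝ}
    (hcont : ContinuousOn (fun p : ℝ × ℝ => h p.1 p.2) (Icc 0 ℓ ×ˢ Icc 0 T))
    {x : ℝ} (hx : x ∈ Icc (0:ℝ) ℓ) : ContinuousOn (fun t => h x t) (Icc 0 T) :=
  hcont.comp (Continuous.continuousOn (by fun_prop)) fun t ht => mk_mem_prod hx ht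

private lemma sect_intX {ℓ T : ℝ} (hℓ : (0:ℝ) ≤ ℓ) {h : ℝ → ℝ → ℝ}
    (hcont : ContinuousOn (fun p : ℝ × ℝ => h p.1 p.2) (Icc 0 ℓ ×ˢ Icc 0 T))
    {t : ℝ} (ht : t ∈ Icc (0:ℝ) T) : IntervalIntegrable (fun x => h x t) volume 0 ℓ :=
  (sect_contX hcont ht).intervalIntegrable_of_Icc hℓ

private lemma contParam {ℓ T : ℝ} (hℓ : (0:ℝ) ≤ ℓ) {h : ℝ → ℝ → ℝ}
    (hcont : ContinuousOn (fun p : ℝ × ℝ => h p.1 p.2) (Icc 0 ℓ ×ˢ Icc 0 T)) :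
    ContinuousOn (fun t => ∫ x in (0:ℝ)..ℓ, h x t) (Icc 0 T) := by
  obtain ⟨C, hC⟩ : ∃ C, ∀ p ∈ Icc (0:ℝ) ℓ ×ˢ Icc (0:ℝ) T, ‖h p.1 p.2‖ ≤ C :=
    (isCompact_Icc.prod isCompact_Icc).exists_bound_of_continuousOn hcont
  have key : ContinuousOn (fun t => ∫ x in Ioc (0:ℝ) ℓ, h x t) (Icc 0 T) := by
    apply MeasureTheory.continuousOn_of_dominated (bound := fun _ => C)
    · intro t ht
      exact ContinuousOn.aestronglyMeasurable
        ((sect_contX hcont ht).mono Ioc_subset_Icc_self) measurableSet_Ioc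
    · intro t ht
      refine (ae_restrict_iff' measurableSet_Ioc).2 (ae_of_all _ fun x hx =>
        hC (x, t) (mk_mem_prod (Ioc_subset_Icc_self hx) ht))
    · exact integrable_const C
    · refine (ae_restrict_iff' measurableSet_Ioc).2 (ae_of_all _ fun x hx => ?_)
      exact sect_contT hcont (Ioc_subset_Icc_self hx)
  refine key.congr fun t ht => ?_
  rw [intervalIntegral.integral_of_le hℓ]

private lemma paramDeriv {ℓ T : ℝ} (hℓ : (0:ℝ) ≤ ℓ) {e w : ℝ → ℝ → ℝ}
    (he : ContinuousOn (fun p : ℝ × ℝ => e p.1 p.2) (Icc 0 ℓ ×ˢ Icc 0 T))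
    (hw : ContinuousOn (fun p : ℝ × ℝ => w p.1 p.2) (Icc 0 ℓ ×ˢ Icc 0 T))
    (hd : ∀ x ∈ Icc (0:ℝ) ℓ, ∀ t ∈ Icc (0:ℝ) T, HasDerivAt (fun s => e x s) (w x t) t)
    {t₀ : ℝ} (ht₀ : t₀ ∈ Ioo (0:ℝ) T) :
    HasDerivAt (fun t => ∫ x in (0:ℝ)..ℓ, e x t) (∫ x in (0:ℝ)..ℓ, w x t₀) t₀ := by
  obtain ⟨C, hC⟩ : ∃ C, ∀ p ∈ Icc (0:ℝ) ℓ ×ˢ Icc (0:ℝ) T, ‖w p.1 p.2‖ ≤ C :=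
    (isCompact_Icc.prod isCompact_Icc).exists_bound_of_continuousOn hw
  have hεpos : 0 < min t₀ (T - t₀) := lt_min ht₀.1 (sub_pos.2 ht₀.2)
  have hball : Metric.ball t₀ (min t₀ (T - t₀)) ⊆ Icc 0 T := by
    intro s hs
    rw [Metric.mem_ball, Real.dist_eq] at hs
    have h1 := abs_lt.1 hs
    have h2 := min_le_left t₀ (T - t₀)
    have h3 := min_le_right t₀ (T - t₀)
    constructor <;> nlinarith [h1.1, h1.2]
  have hIoc : Set.uIoc (0:ℝ) ℓ = Ioc 0 ℓ := uIoc_of_le hℓ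
  have ht₀I : t₀ ∈ Icc (0:ℝ) T := Ioo_subset_Icc_self ht₀
  refine (intervalIntegral.hasDerivAt_integral_of_dominated_loc_of_deriv_le (μ := volume)
    (F := fun t x => e x t) (F' := fun t x => w x t) (x₀ := t₀) (a := (0:ℝ)) (b := ℓ)
    (bound := fun _ => C) (s := Metric.ball t₀ (min t₀ (T - t₀)))
    (Metric.ball_mem_nhds t₀ hεpos) ?_ ?_ ?_ ?_ ?_ ?_).2
  · refine Filter.eventually_of_mem (Metric.ball_mem_nhds t₀ hεpos) fun t ht => ?_
    rw [hIoc]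
    exact ContinuousOn.aestronglyMeasurable
      ((sect_contX he (hball ht)).mono Ioc_subset_Icc_self) measurableSet_Ioc
  · exact ((sect_contX he ht₀I).mono (by rw [uIcc_of_le hℓ])).intervalIntegrable
  · rw [hIoc]
    exact ContinuousOn.aestronglyMeasurable
      ((sect_contX hw ht₀I).mono Ioc_subset_Icc_self) measurableSet_Ioc
  · refine ae_of_all _ fun x hx t ht => ?_
    rw [hIoc] at hx
    exact hC (x, t) (mk_mem_prod (Ioc_subset_Icc_self hx) (hball ht))
  · exact intervalIntegrable_const
  · refine ae_of_all _ fun x hx t ht => ?_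
    rw [hIoc] at hx
    exact hd x (Ioc_subset_Icc_self hx) t (hball ht)

section EnergyDefs

variable {ℓ T : ℝ} {ρA μ Tr r κ : ℝ → ℝ} {F : ℝ → ℝ → ℝ}

/-- power input -/
private noncomputable def PP (sol : ForwardSol ℓ T ρA μ Tr r κ F) (t : ℝ) : ℝ :=
  ∫ x in (0:ℝ)..ℓ, F x t * sol.ut x t

/-- damping dissipation -/
private noncomputable def MM (sol : ForwardSol ℓ T ρA μ Tr r κ F) (t : ℝ) : ℝ :=
  ∫ x in (0:ℝ)..ℓ, μ x * sol.ut x t ^ 2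

/-- Kelvin–Voigt dissipation -/
private noncomputable def KK (sol : ForwardSol ℓ T ρA μ Tr r κ F) (t : ℝ) : ℝ :=
  ∫ x in (0:ℝ)..ℓ, κ x * sol.uxxt x t ^ 2

/-- squared forcing -/
private noncomputable def FF (sol : ForwardSol ℓ T ρA μ Tr r κ F) (t : ℝ) : ℝ :=
  ∫ x in (0:ℝ)..ℓ, F x t ^ 2

/-- raw dissipation integrand -/
private noncomputable def JJ (sol : ForwardSol ℓ T ρA μ Tr r κ F) (t : ℝ) : ℝ :=
  ∫ x in (0:ℝ)..ℓ, sol.uxxt x t ^ 2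

/-- total energy -/
private noncomputable def EE (sol : ForwardSol ℓ T ρA μ Tr r κ F) (t : ℝ) : ℝ :=
  ∫ x in (0:ℝ)..ℓ,
    (ρA x * sol.ut x t ^ 2 + Tr x * sol.ux x t ^ 2 + r x * sol.uxx x t ^ 2)

/-- energy rate -/
private noncomputable def GG (sol : ForwardSol ℓ T ρA μ Tr r κ F) (t : ℝ) : ℝ :=
  ∫ x in (0:ℝ)..ℓ,
    (2 * (ρA x * sol.ut x t * sol.utt x t) + 2 * (Tr x * sol.ux x t * sol.uxt x t)
      + 2 * (r x * sol.uxx x t * sol.uxxt x t))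

end EnergyDefs

/-- **Kelvin–Voigt dissipation estimate of Theorem 1.** -/
theorem kelvin_voigt_dissipation_estimate
    (ℓ T ρ₀ r₀ κ₀ : ℝ) (hℓ : 0 < ℓ) (hT : 0 < T)
    (hρ₀ : 0 < ρ₀) (hr₀ : 0 < r₀) (hκ₀ : 0 < κ₀)
    (ρA μ Tr r κ : ℝ → ℝ) (F : ℝ → ℝ → ℝ)
    (hρA : ContDiffOn ℝ (⊤ : ℕ∞) ρA (Icc 0 ℓ))
    (hμ : ContDiffOn ℝ (⊤ : ℕ∞) μ (Icc 0 ℓ))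
    (hTr : ContDiffOn ℝ (⊤ : ℕ∞) Tr (Icc 0 ℓ))
    (hr : ContDiffOn ℝ (⊤ : ℕ∞) r (Icc 0 ℓ))
    (hκ : ContDiffOn ℝ (⊤ : ℕ∞) κ (Icc 0 ℓ))
    (hρAb : ∀ x ∈ Icc (0:ℝ) ℓ, ρ₀ ≤ ρA x)
    (hμb : ∀ x ∈ Icc (0:ℝ) ℓ, 0 ≤ μ x)
    (hTrb : ∀ x ∈ Icc (0:ℝ) ℓ, 0 ≤ Tr x)
    (hrb : ∀ x ∈ Icc (0:ℝ) ℓ, r₀ ≤ r x)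
    (hκb : ∀ x ∈ Icc (0:ℝ) ℓ, κ₀ ≤ κ x)
    (hF : ContinuousOn (fun p : ℝ × ℝ => F p.1 p.2) (Icc 0 ℓ ×ˢ Icc 0 T))
    (sol : ForwardSol ℓ T ρA μ Tr r κ F) :
    2 * κ₀ * (∫ t in (0:ℝ)..T, ∫ x in (0:ℝ)..ℓ, (sol.uxxt x t) ^ 2)
      ≤ Real.exp (T / ρ₀) * (∫ t in (0:ℝ)..T, ∫ x in (0:ℝ)..ℓ, (F x t) ^ 2) := by
  have hl := hℓ.le
  have h0ℓ : (0:ℝ) ∈ Icc (0:ℝ) ℓ := ⟨le_refl _, hl⟩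
  have hℓmem : ℓ ∈ Icc (0:ℝ) ℓ := ⟨hl, le_refl _⟩
  have h0T : (0:ℝ) ∈ Icc (0:ℝ) T := ⟨le_refl _, hT.le⟩
  have hTmem : T ∈ Icc (0:ℝ) T := ⟨hT.le, le_refl _⟩
  -- coefficient continuity, two-variable versions
  have CρA : ContinuousOn (fun p : ℝ × ℝ => ρA p.1) (Icc 0 ℓ ×ˢ Icc 0 T) :=
    hρA.continuousOn.comp continuous_fst.continuousOn fun p hp => hp.1
  have Cμ : ContinuousOn (fun p : ℝ × ℝ => μ p.1) (Icc 0 ℓ ×ˢ Icc 0 T) :=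
    hμ.continuousOn.comp continuous_fst.continuousOn fun p hp => hp.1
  have CTr : ContinuousOn (fun p : ℝ × ℝ => Tr p.1) (Icc 0 ℓ ×ˢ Icc 0 T) :=
    hTr.continuousOn.comp continuous_fst.continuousOn fun p hp => hp.1
  have Cr : ContinuousOn (fun p : ℝ × ℝ => r p.1) (Icc 0 ℓ ×ˢ Icc 0 T) :=
    hr.continuousOn.comp continuous_fst.continuousOn fun p hp => hp.1
  have Cκ : ContinuousOn (fun p : ℝ × ℝ => κ p.1) (Icc 0 ℓ ×ˢ Icc 0 T) :=
    hκ.continuousOn.comp continuous_fst.continuousOn fun p hp => hp.1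
  -- vanishing initial values of the spatial derivatives
  have z_ux0 : ∀ x ∈ Ioo (0:ℝ) ℓ, sol.ux x 0 = 0 := by
    intro x hx
    have h₁ : (fun y => sol.u y 0) =ᶠ[𝓝 x] fun _ => (0:ℝ) :=
      Filter.eventually_of_mem (isOpen_Ioo.mem_nhds hx) fun y hy => sol.init_u y hy
    exact (sol.hux x (Ioo_subset_Icc_self hx) 0 h0T).unique
      ((hasDerivAt_const x (0:ℝ)).congr_of_eventuallyEq h₁)
  have z_uxx0 : ∀ x ∈ Ioo (0:ℝ) ℓ, sol.uxx x 0 = 0 := by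
    intro x hx
    have h₁ : (fun y => sol.ux y 0) =ᶠ[𝓝 x] fun _ => (0:ℝ) :=
      Filter.eventually_of_mem (isOpen_Ioo.mem_nhds hx) fun y hy => z_ux0 y hy
    exact (sol.huxx x (Ioo_subset_Icc_self hx) 0 h0T).unique
      ((hasDerivAt_const x (0:ℝ)).congr_of_eventuallyEq h₁)
  -- vanishing of `ut` on the lateral boundary
  have z_ut0 : ∀ t ∈ Icc (0:ℝ) T, sol.ut 0 t = 0 := by
    intro t ht
    have h1 : HasDerivWithinAt (fun s => sol.u 0 s) (sol.ut 0 t) (Icc 0 T) t :=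
      (sol.hut 0 h0ℓ t ht).hasDerivWithinAt
    have h2 : HasDerivWithinAt (fun s => sol.u 0 s) 0 (Icc 0 T) t :=
      (hasDerivWithinAt_const t (Icc (0:ℝ) T) (0:ℝ)).congr
        (fun s hs => sol.bc_u0 s hs) (sol.bc_u0 t ht)
    exact ((uniqueDiffOn_Icc hT) t ht).eq_deriv _ h1 h2
  have z_utl : ∀ t ∈ Icc (0:ℝ) T, sol.ut ℓ t = 0 := by
    intro t ht
    have h1 : HasDerivWithinAt (fun s => sol.u ℓ s) (sol.ut ℓ t) (Icc 0 T) t :=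
      (sol.hut ℓ hℓmem t ht).hasDerivWithinAt
    have h2 : HasDerivWithinAt (fun s => sol.u ℓ s) 0 (Icc 0 T) t :=
      (hasDerivWithinAt_const t (Icc (0:ℝ) T) (0:ℝ)).congr
        (fun s hs => sol.bc_ul s hs) (sol.bc_ul t ht)
    exact ((uniqueDiffOn_Icc hT) t ht).eq_deriv _ h1 h2
  -- mixed partial derivatives via Clairaut
  have hO : IsOpen (Ioo (0:ℝ) ℓ ×ˢ Ioo (0:ℝ) T) := isOpen_Ioo.prod isOpen_Ioo
  have hsub : (Ioo (0:ℝ) ℓ ×ˢ Ioo (0:ℝ) T) ⊆ Icc (0:ℝ) ℓ ×ˢ Icc (0:ℝ) T :=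
    prod_mono Ioo_subset_Icc_self Ioo_subset_Icc_self
  have hWu : ContDiffOn ℝ (⊤ : ℕ∞) (fun p : ℝ × ℝ => sol.u p.1 p.2)
      (Ioo (0:ℝ) ℓ ×ˢ Ioo (0:ℝ) T) := sol.smooth.mono hsub
  have hwx_u : ∀ p ∈ Ioo (0:ℝ) ℓ ×ˢ Ioo (0:ℝ) T,
      HasDerivAt (fun y => sol.u y p.2) (sol.ux p.1 p.2) p.1 :=
    fun p hp => sol.hux p.1 (Ioo_subset_Icc_self hp.1) p.2 (Ioo_subset_Icc_self hp.2)
  have hwt_u : ∀ p ∈ Ioo (0:ℝ) ℓ ×ˢ Ioo (0:ℝ) T,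
      HasDerivAt (fun s => sol.u p.1 s) (sol.ut p.1 p.2) p.2 :=
    fun p hp => sol.hut p.1 (Ioo_subset_Icc_self hp.1) p.2 (Ioo_subset_Icc_self hp.2)
  have mp1 : ∀ x ∈ Ioo (0:ℝ) ℓ, ∀ t ∈ Ioo (0:ℝ) T,
      HasDerivAt (fun y => sol.ut y t) (sol.uxt x t) x :=
    fun x hx t ht => clairaut_aux hO hWu hwx_u hwt_u (mk_mem_prod hx ht)
      (sol.huxt x (Ioo_subset_Icc_self hx) t (Ioo_subset_Icc_self ht))
  have hWux : ContDiffOn ℝ (⊤ : ℕ∞) (fun p : ℝ × ℝ => sol.ux p.1 p.2)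
      (Ioo (0:ℝ) ℓ ×ˢ Ioo (0:ℝ) T) := d1_smooth hO hWu hwx_u
  have hwx_ux : ∀ p ∈ Ioo (0:ℝ) ℓ ×ˢ Ioo (0:ℝ) T,
      HasDerivAt (fun y => sol.ux y p.2) (sol.uxx p.1 p.2) p.1 :=
    fun p hp => sol.huxx p.1 (Ioo_subset_Icc_self hp.1) p.2 (Ioo_subset_Icc_self hp.2)
  have hwt_ux : ∀ p ∈ Ioo (0:ℝ) ℓ ×ˢ Ioo (0:ℝ) T,
      HasDerivAt (fun s => sol.ux p.1 s) (sol.uxt p.1 p.2) p.2 :=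
    fun p hp => sol.huxt p.1 (Ioo_subset_Icc_self hp.1) p.2 (Ioo_subset_Icc_self hp.2)
  have mp2 : ∀ x ∈ Ioo (0:ℝ) ℓ, ∀ t ∈ Ioo (0:ℝ) T,
      HasDerivAt (fun y => sol.uxt y t) (sol.uxxt x t) x :=
    fun x hx t ht => clairaut_aux hO hWux hwx_ux hwt_ux (mk_mem_prod hx ht)
      (sol.huxxt x (Ioo_subset_Icc_self hx) t (Ioo_subset_Icc_self ht))
  -- two-variable continuity of all integrands
  have cP2 : ContinuousOn (fun p : ℝ × ℝ => F p.1 p.2 * sol.ut p.1 p.2)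
      (Icc 0 ℓ ×ˢ Icc 0 T) := hF.mul sol.cont_ut
  have cM2 : ContinuousOn (fun p : ℝ × ℝ => μ p.1 * sol.ut p.1 p.2 ^ 2)
      (Icc 0 ℓ ×ˢ Icc 0 T) := Cμ.mul (sol.cont_ut.pow 2)
  have cK2 : ContinuousOn (fun p : ℝ × ℝ => κ p.1 * sol.uxxt p.1 p.2 ^ 2)
      (Icc 0 ℓ ×ˢ Icc 0 T) := Cκ.mul (sol.cont_uxxt.pow 2)
  have cF2 : ContinuousOn (fun p : ℝ × ℝ => F p.1 p.2 ^ 2)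
      (Icc 0 ℓ ×ˢ Icc 0 T) := hF.pow 2
  have cJ2 : ContinuousOn (fun p : ℝ × ℝ => sol.uxxt p.1 p.2 ^ 2)
      (Icc 0 ℓ ×ˢ Icc 0 T) := sol.cont_uxxt.pow 2
  have cE2 : ContinuousOn (fun p : ℝ × ℝ => ρA p.1 * sol.ut p.1 p.2 ^ 2
      + Tr p.1 * sol.ux p.1 p.2 ^ 2 + r p.1 * sol.uxx p.1 p.2 ^ 2)
      (Icc 0 ℓ ×ˢ Icc 0 T) :=
    ((CρA.mul (sol.cont_ut.pow 2)).add (CTr.mul (sol.cont_ux.pow 2))).add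
      (Cr.mul (sol.cont_uxx.pow 2))
  have cG2 : ContinuousOn (fun p : ℝ × ℝ => 2 * (ρA p.1 * sol.ut p.1 p.2 * sol.utt p.1 p.2)
      + 2 * (Tr p.1 * sol.ux p.1 p.2 * sol.uxt p.1 p.2)
      + 2 * (r p.1 * sol.uxx p.1 p.2 * sol.uxxt p.1 p.2)) (Icc 0 ℓ ×ˢ Icc 0 T) :=
    ((continuousOn_const.mul ((CρA.mul sol.cont_ut).mul sol.cont_utt)).add
      (continuousOn_const.mul ((CTr.mul sol.cont_ux).mul sol.cont_uxt))).add
      (continuousOn_const.mul ((Cr.mul sol.cont_uxx).mul sol.cont_uxxt))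
  have cI12 : ContinuousOn (fun p : ℝ × ℝ => ρA p.1 * sol.ut p.1 p.2 * sol.utt p.1 p.2)
      (Icc 0 ℓ ×ˢ Icc 0 T) := (CρA.mul sol.cont_ut).mul sol.cont_utt
  have cI52 : ContinuousOn (fun p : ℝ × ℝ => Tr p.1 * sol.ux p.1 p.2 * sol.uxt p.1 p.2)
      (Icc 0 ℓ ×ˢ Icc 0 T) := (CTr.mul sol.cont_ux).mul sol.cont_uxt
  have cI62 : ContinuousOn (fun p : ℝ × ℝ => r p.1 * sol.uxx p.1 p.2 * sol.uxxt p.1 p.2)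
      (Icc 0 ℓ ×ˢ Icc 0 T) := (Cr.mul sol.cont_uxx).mul sol.cont_uxxt
  have cI32 : ContinuousOn (fun p : ℝ × ℝ => sol.Ax p.1 p.2 * sol.ut p.1 p.2)
      (Icc 0 ℓ ×ˢ Icc 0 T) := sol.cont_Ax.mul sol.cont_ut
  have cI42 : ContinuousOn (fun p : ℝ × ℝ => sol.Bxx p.1 p.2 * sol.ut p.1 p.2)
      (Icc 0 ℓ ×ˢ Icc 0 T) := sol.cont_Bxx.mul sol.cont_ut
  -- interval integrability of the sections
  have iP : ∀ t ∈ Icc (0:ℝ) T, IntervalIntegrable (fun x => F x t * sol.ut x t) volume 0 ℓ :=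
    fun t ht => sect_intX (h := fun x t => F x t * sol.ut x t) hl cP2 ht
  have iM : ∀ t ∈ Icc (0:ℝ) T, IntervalIntegrable (fun x => μ x * sol.ut x t ^ 2) volume 0 ℓ :=
    fun t ht => sect_intX (h := fun x t => μ x * sol.ut x t ^ 2) hl cM2 ht
  have iK : ∀ t ∈ Icc (0:ℝ) T,
      IntervalIntegrable (fun x => κ x * sol.uxxt x t ^ 2) volume 0 ℓ :=
    fun t ht => sect_intX (h := fun x t => κ x * sol.uxxt x t ^ 2) hl cK2 ht
  have iFf : ∀ t ∈ Icc (0:ℝ) T, IntervalIntegrable (fun x => F x t ^ 2) volume 0 ℓ :=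
    fun t ht => sect_intX (h := fun x t => F x t ^ 2) hl cF2 ht
  have iJ : ∀ t ∈ Icc (0:ℝ) T, IntervalIntegrable (fun x => sol.uxxt x t ^ 2) volume 0 ℓ :=
    fun t ht => sect_intX (h := fun x t => sol.uxxt x t ^ 2) hl cJ2 ht
  have iE : ∀ t ∈ Icc (0:ℝ) T, IntervalIntegrable (fun x => ρA x * sol.ut x t ^ 2
      + Tr x * sol.ux x t ^ 2 + r x * sol.uxx x t ^ 2) volume 0 ℓ :=
    fun t ht => sect_intX (h := fun x t => ρA x * sol.ut x t ^ 2
      + Tr x * sol.ux x t ^ 2 + r x * sol.uxx x t ^ 2) hl cE2 ht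
  have iI1 : ∀ t ∈ Icc (0:ℝ) T,
      IntervalIntegrable (fun x => ρA x * sol.ut x t * sol.utt x t) volume 0 ℓ :=
    fun t ht => sect_intX (h := fun x t => ρA x * sol.ut x t * sol.utt x t) hl cI12 ht
  have iI5 : ∀ t ∈ Icc (0:ℝ) T,
      IntervalIntegrable (fun x => Tr x * sol.ux x t * sol.uxt x t) volume 0 ℓ :=
    fun t ht => sect_intX (h := fun x t => Tr x * sol.ux x t * sol.uxt x t) hl cI52 ht
  have iI6 : ∀ t ∈ Icc (0:ℝ) T,
      IntervalIntegrable (fun x => r x * sol.uxx x t * sol.uxxt x t) volume 0 ℓ :=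
    fun t ht => sect_intX (h := fun x t => r x * sol.uxx x t * sol.uxxt x t) hl cI62 ht
  have iI3 : ∀ t ∈ Icc (0:ℝ) T,
      IntervalIntegrable (fun x => sol.Ax x t * sol.ut x t) volume 0 ℓ :=
    fun t ht => sect_intX (h := fun x t => sol.Ax x t * sol.ut x t) hl cI32 ht
  have iI4 : ∀ t ∈ Icc (0:ℝ) T,
      IntervalIntegrable (fun x => sol.Bxx x t * sol.ut x t) volume 0 ℓ :=
    fun t ht => sect_intX (h := fun x t => sol.Bxx x t * sol.ut x t) hl cI42 ht
  -- the spatial energy identity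
  have Gident : ∀ t ∈ Ioo (0:ℝ) T, GG sol t = 2 * PP sol t - 2 * MM sol t - 2 * KK sol t := by
    intro t ht
    have htI : t ∈ Icc (0:ℝ) T := Ioo_subset_Icc_self ht
    -- integration by parts for the tension term
    have intA : (∫ x in (0:ℝ)..ℓ, (sol.Ax x t * sol.ut x t
        + Tr x * sol.ux x t * sol.uxt x t)) = 0 := by
      have hg1cont : ContinuousOn (fun y => Tr y * sol.ux y t * sol.ut y t) (Icc 0 ℓ) :=
        sect_contX (h := fun x t => Tr x * sol.ux x t * sol.ut x t)
          ((CTr.mul sol.cont_ux).mul sol.cont_ut) htI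
      have hg1d : ∀ y ∈ Ioo (0:ℝ) ℓ, HasDerivAt (fun y => Tr y * sol.ux y t * sol.ut y t)
          (sol.Ax y t * sol.ut y t + Tr y * sol.ux y t * sol.uxt y t) y := by
        intro y hy
        exact (sol.hAx y (Ioo_subset_Icc_self hy) t htI).mul (mp1 y hy t ht)
      rw [intervalIntegral.integral_eq_sub_of_hasDerivAt_of_le hl hg1cont hg1d
        ((iI3 t htI).add (iI5 t htI))]
      rw [z_utl t htI, z_ut0 t htI]
      ring
    -- integration by parts (twice) for the bending term
    have intB : (∫ x in (0:ℝ)..ℓ, (sol.Bxx x t * sol.ut x t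
        - (r x * sol.uxx x t * sol.uxxt x t + κ x * sol.uxxt x t ^ 2))) = 0 := by
      have hg2cont : ContinuousOn (fun y => sol.Bx y t * sol.ut y t
          - (r y * sol.uxx y t + κ y * sol.uxxt y t) * sol.uxt y t) (Icc 0 ℓ) :=
        sect_contX (h := fun x t => sol.Bx x t * sol.ut x t
            - (r x * sol.uxx x t + κ x * sol.uxxt x t) * sol.uxt x t)
          ((sol.cont_Bx.mul sol.cont_ut).sub
            (((Cr.mul sol.cont_uxx).add (Cκ.mul sol.cont_uxxt)).mul sol.cont_uxt)) htI
      have hg2d : ∀ y ∈ Ioo (0:ℝ) ℓ, HasDerivAt (fun y => sol.Bx y t * sol.ut y t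
          - (r y * sol.uxx y t + κ y * sol.uxxt y t) * sol.uxt y t)
          (sol.Bxx y t * sol.ut y t
            - (r y * sol.uxx y t * sol.uxxt y t + κ y * sol.uxxt y t ^ 2)) y := by
        intro y hy
        have h1 := (sol.hBxx y (Ioo_subset_Icc_self hy) t htI).fun_mul (mp1 y hy t ht)
        have h2 := (sol.hBx y (Ioo_subset_Icc_self hy) t htI).fun_mul (mp2 y hy t ht)
        have h3 := h1.fun_sub h2
        exact h3.congr_deriv (by ring)
      have hint : IntervalIntegrable (fun x => sol.Bxx x t * sol.ut x t
          - (r x * sol.uxx x t * sol.uxxt x t + κ x * sol.uxxt x t ^ 2)) volume 0 ℓ :=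
        (iI4 t htI).sub ((iI6 t htI).add (iK t htI))
      rw [intervalIntegral.integral_eq_sub_of_hasDerivAt_of_le hl hg2cont hg2d hint]
      rw [z_utl t htI, z_ut0 t htI, sol.bc_m0 t htI, sol.bc_ml t htI]
      ring
    -- multiply the PDE by `ut` and integrate
    have pdeI : PP sol t = (∫ x in (0:ℝ)..ℓ, ρA x * sol.ut x t * sol.utt x t) + MM sol t
        - (∫ x in (0:ℝ)..ℓ, sol.Ax x t * sol.ut x t)
        + (∫ x in (0:ℝ)..ℓ, sol.Bxx x t * sol.ut x t) := by
      have hcongr : (∫ x in (0:ℝ)..ℓ, F x t * sol.ut x t)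
          = ∫ x in (0:ℝ)..ℓ, (ρA x * sol.ut x t * sol.utt x t + μ x * sol.ut x t ^ 2
            - sol.Ax x t * sol.ut x t + sol.Bxx x t * sol.ut x t) := by
        apply intervalIntegral.integral_congr_ae
        filter_upwards [(Set.countable_singleton ℓ).ae_notMem volume] with x hxne hxI
        rw [uIoc_of_le hl] at hxI
        have hxIoo : x ∈ Ioo (0:ℝ) ℓ :=
          ⟨hxI.1, lt_of_le_of_ne hxI.2 fun h => hxne (h ▸ mem_singleton _)⟩
        have hpde := sol.pde x hxIoo t ht
        rw [← hpde]; ring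
      rw [PP, MM, hcongr,
        intervalIntegral.integral_add (((iI1 t htI).add (iM t htI)).sub (iI3 t htI)) (iI4 t htI),
        intervalIntegral.integral_sub ((iI1 t htI).add (iM t htI)) (iI3 t htI),
        intervalIntegral.integral_add (iI1 t htI) (iM t htI)]
    -- split the integrals in the identities
    have eA : (∫ x in (0:ℝ)..ℓ, sol.Ax x t * sol.ut x t)
        + (∫ x in (0:ℝ)..ℓ, Tr x * sol.ux x t * sol.uxt x t) = 0 := by
      rw [← intervalIntegral.integral_add (iI3 t htI) (iI5 t htI)]
      exact intA
    have eB : (∫ x in (0:ℝ)..ℓ, sol.Bxx x t * sol.ut x t)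
        - ((∫ x in (0:ℝ)..ℓ, r x * sol.uxx x t * sol.uxxt x t) + KK sol t) = 0 := by
      rw [KK, ← intervalIntegral.integral_add (iI6 t htI) (iK t htI),
        ← intervalIntegral.integral_sub (iI4 t htI) ((iI6 t htI).add (iK t htI))]
      exact intB
    have eG : GG sol t = 2 * (∫ x in (0:ℝ)..ℓ, ρA x * sol.ut x t * sol.utt x t)
        + 2 * (∫ x in (0:ℝ)..ℓ, Tr x * sol.ux x t * sol.uxt x t)
        + 2 * (∫ x in (0:ℝ)..ℓ, r x * sol.uxx x t * sol.uxxt x t) := by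
      rw [GG,
        intervalIntegral.integral_add (((iI1 t htI).const_mul 2).add ((iI5 t htI).const_mul 2))
          ((iI6 t htI).const_mul 2),
        intervalIntegral.integral_add ((iI1 t htI).const_mul 2) ((iI5 t htI).const_mul 2),
        intervalIntegral.integral_const_mul, intervalIntegral.integral_const_mul,
        intervalIntegral.integral_const_mul]
    linarith [pdeI, eA, eB, eG]
  -- continuity in time of the various integral functionals
  have PfC : ContinuousOn (PP sol) (Icc 0 T) :=
    contParam hl (h := fun x t => F x t * sol.ut x t) cP2
  have MfC : ContinuousOn (MM sol) (Icc 0 T) :=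
    contParam hl (h := fun x t => μ x * sol.ut x t ^ 2) cM2
  have KfC : ContinuousOn (KK sol) (Icc 0 T) :=
    contParam hl (h := fun x t => κ x * sol.uxxt x t ^ 2) cK2
  have FfC : ContinuousOn (FF sol) (Icc 0 T) :=
    contParam hl (h := fun x t => F x t ^ 2) cF2
  have JfC : ContinuousOn (JJ sol) (Icc 0 T) :=
    contParam hl (h := fun x t => sol.uxxt x t ^ 2) cJ2
  have EfC : ContinuousOn (EE sol) (Icc 0 T) :=
    contParam hl (h := fun x t => ρA x * sol.ut x t ^ 2 + Tr x * sol.ux x t ^ 2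
      + r x * sol.uxx x t ^ 2) cE2
  have GfC : ContinuousOn (GG sol) (Icc 0 T) :=
    contParam hl (h := fun x t => 2 * (ρA x * sol.ut x t * sol.utt x t)
      + 2 * (Tr x * sol.ux x t * sol.uxt x t)
      + 2 * (r x * sol.uxx x t * sol.uxxt x t)) cG2
  -- derivative of the energy
  have Ederiv : ∀ t₀ ∈ Ioo (0:ℝ) T, HasDerivAt (EE sol) (GG sol t₀) t₀ := by
    intro t₀ ht₀
    have hd : ∀ x ∈ Icc (0:ℝ) ℓ, ∀ s ∈ Icc (0:ℝ) T,
        HasDerivAt (fun s => ρA x * sol.ut x s ^ 2 + Tr x * sol.ux x s ^ 2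
          + r x * sol.uxx x s ^ 2)
        (2 * (ρA x * sol.ut x s * sol.utt x s) + 2 * (Tr x * sol.ux x s * sol.uxt x s)
          + 2 * (r x * sol.uxx x s * sol.uxxt x s)) s := by
      intro x hx s hs
      have h1 := ((sol.hutt x hx s hs).fun_pow 2).const_mul (ρA x)
      have h2 := ((sol.huxt x hx s hs).fun_pow 2).const_mul (Tr x)
      have h3 := ((sol.huxxt x hx s hs).fun_pow 2).const_mul (r x)
      exact ((h1.fun_add h2).fun_add h3).congr_deriv (by push_cast; ring)
    exact paramDeriv hl (e := fun x s => ρA x * sol.ut x s ^ 2 + Tr x * sol.ux x s ^ 2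
        + r x * sol.uxx x s ^ 2)
      (w := fun x s => 2 * (ρA x * sol.ut x s * sol.utt x s)
        + 2 * (Tr x * sol.ux x s * sol.uxt x s) + 2 * (r x * sol.uxx x s * sol.uxxt x s))
      cE2 cG2 hd ht₀
  -- the energy vanishes at time `0`
  have Ezero : EE sol 0 = 0 := by
    rw [EE, intervalIntegral.integral_of_le hl, MeasureTheory.integral_Ioc_eq_integral_Ioo]
    have heq : EqOn (fun x => ρA x * sol.ut x 0 ^ 2 + Tr x * sol.ux x 0 ^ 2
        + r x * sol.uxx x 0 ^ 2) (fun _ => (0:ℝ)) (Ioo 0 ℓ) := fun x hx => by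
      simp [z_ux0 x hx, z_uxx0 x hx, sol.init_ut x hx]
    rw [MeasureTheory.setIntegral_congr_fun measurableSet_Ioo heq]
    simp
  have iGt : ∀ t ∈ Icc (0:ℝ) T, IntervalIntegrable (GG sol) volume 0 t :=
    fun t ht => (GfC.mono (Icc_subset_Icc le_rfl ht.2)).intervalIntegrable_of_Icc ht.1
  -- fundamental theorem of calculus for the energy
  have E_FTC : ∀ t ∈ Icc (0:ℝ) T, EE sol t = ∫ s in (0:ℝ)..t, GG sol s := by
    intro t ht
    have h := intervalIntegral.integral_eq_sub_of_hasDerivAt_of_le ht.1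
      (EfC.mono (Icc_subset_Icc le_rfl ht.2))
      (fun s hs => Ederiv s ⟨hs.1, lt_of_lt_of_le hs.2 ht.2⟩)
      (iGt t ht)
    rw [h, Ezero, sub_zero]
  -- nonnegativity
  have Mnn : ∀ t ∈ Icc (0:ℝ) T, 0 ≤ MM sol t := fun t ht => by
    rw [MM]
    exact intervalIntegral.integral_nonneg hl fun x hx =>
      mul_nonneg (hμb x hx) (sq_nonneg _)
  have Knn : ∀ t ∈ Icc (0:ℝ) T, 0 ≤ KK sol t := fun t ht => by
    rw [KK]
    exact intervalIntegral.integral_nonneg hl fun x hx =>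
      mul_nonneg (le_trans hκ₀.le (hκb x hx)) (sq_nonneg _)
  have Fnn : ∀ t ∈ Icc (0:ℝ) T, 0 ≤ FF sol t := fun t ht => by
    rw [FF]
    exact intervalIntegral.integral_nonneg hl fun x hx => sq_nonneg _
  have Enn : ∀ t ∈ Icc (0:ℝ) T, 0 ≤ EE sol t := fun t ht => by
    rw [EE]
    exact intervalIntegral.integral_nonneg hl fun x hx =>
      add_nonneg (add_nonneg (mul_nonneg (le_trans hρ₀.le (hρAb x hx)) (sq_nonneg _))
        (mul_nonneg (hTrb x hx) (sq_nonneg _)))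
        (mul_nonneg (le_trans hr₀.le (hrb x hx)) (sq_nonneg _))
  -- the power input is controlled by the energy and the forcing
  have twoP_le : ∀ t ∈ Icc (0:ℝ) T, 2 * PP sol t ≤ ρ₀⁻¹ * EE sol t + FF sol t := by
    intro t ht
    have hs1 : ∀ x ∈ Icc (0:ℝ) ℓ, 2 * ρ₀ * (F x t * sol.ut x t)
        ≤ (ρA x * sol.ut x t ^ 2 + Tr x * sol.ux x t ^ 2 + r x * sol.uxx x t ^ 2)
          + ρ₀ * F x t ^ 2 := by
      intro x hx
      nlinarith [sq_nonneg (sol.ut x t - F x t), sq_nonneg (sol.ut x t), hρ₀,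
        hρAb x hx, mul_nonneg (hTrb x hx) (sq_nonneg (sol.ux x t)),
        mul_nonneg (le_trans hr₀.le (hrb x hx)) (sq_nonneg (sol.uxx x t))]
    have hmono := intervalIntegral.integral_mono_on hl
      ((iP t ht).const_mul (2 * ρ₀)) ((iE t ht).add ((iFf t ht).const_mul ρ₀)) hs1
    rw [intervalIntegral.integral_add (iE t ht) ((iFf t ht).const_mul ρ₀)] at hmono
    simp only [intervalIntegral.integral_const_mul] at hmono
    have h3 := mul_le_mul_of_nonneg_left hmono (inv_pos.2 hρ₀).le
    have hne : ρ₀ ≠ 0 := ne_of_gt hρ₀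
    calc 2 * PP sol t = ρ₀⁻¹ * (2 * ρ₀ * PP sol t) := by field_simp
      _ ≤ ρ₀⁻¹ * (EE sol t + ρ₀ * FF sol t) := h3
      _ = ρ₀⁻¹ * EE sol t + FF sol t := by field_simp
  -- the integral form of the Gronwall inequality
  have qC : ContinuousOn (fun s => ρ₀⁻¹ * EE sol s + FF sol s) (Icc 0 T) :=
    (continuousOn_const.mul EfC).add FfC
  have iq : ∀ t ∈ Icc (0:ℝ) T,
      IntervalIntegrable (fun s => ρ₀⁻¹ * EE sol s + FF sol s) volume 0 t :=
    fun t ht => (qC.mono (Icc_subset_Icc le_rfl ht.2)).intervalIntegrable_of_Icc ht.1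
  have E_le_I : ∀ t ∈ Icc (0:ℝ) T,
      EE sol t ≤ ∫ s in (0:ℝ)..t, (ρ₀⁻¹ * EE sol s + FF sol s) := by
    intro t ht
    rw [E_FTC t ht]
    refine intervalIntegral.integral_mono_ae_restrict ht.1 (iGt t ht) (iq t ht) ?_
    refine (ae_restrict_iff' measurableSet_Icc).2 ?_
    filter_upwards [((Set.finite_singleton T).insert (0:ℝ)).countable.ae_notMem
      volume] with s hs hsI
    have hs0 : s ≠ 0 := fun h => hs (by rw [h]; exact mem_insert _ _)
    have hsT : s ≠ T := fun h => hs (by rw [h]; exact mem_insert_of_mem _ (mem_singleton _))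
    have hsIoo : s ∈ Ioo (0:ℝ) T :=
      ⟨lt_of_le_of_ne hsI.1 (Ne.symm hs0), lt_of_le_of_ne (le_trans hsI.2 ht.2) hsT⟩
    have hG := Gident s hsIoo
    have h2 := twoP_le s (Ioo_subset_Icc_self hsIoo)
    have hM := Mnn s (Ioo_subset_Icc_self hsIoo)
    have hK := Knn s (Ioo_subset_Icc_self hsIoo)
    linarith
  -- continuity of the primitive
  have IfC : ContinuousOn (fun t => ∫ s in (0:ℝ)..t, (ρ₀⁻¹ * EE sol s + FF sol s))
      (Icc 0 T) := by
    have h := intervalIntegral.continuousOn_primitive_interval' (iq T hTmem)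
      (by rw [uIcc_of_le hT.le]; exact h0T)
    rwa [uIcc_of_le hT.le] at h
  -- the exponential-weighted primitive is decreasing up to the forcing
  have gron : (∫ s in (0:ℝ)..T, (ρ₀⁻¹ * EE sol s + FF sol s))
      ≤ Real.exp (T / ρ₀) * ∫ s in (0:ℝ)..T, FF sol s := by
    have Ideriv : ∀ s ∈ Ioo (0:ℝ) T,
        HasDerivAt (fun t => ∫ s in (0:ℝ)..t, (ρ₀⁻¹ * EE sol s + FF sol s))
          (ρ₀⁻¹ * EE sol s + FF sol s) s := by
      intro s hsIoo
      exact intervalIntegral.integral_hasDerivAt_right (iq s (Ioo_subset_Icc_self hsIoo))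
        ⟨Ioo 0 T, Ioo_mem_nhds hsIoo.1 hsIoo.2,
          ((qC.mono Ioo_subset_Icc_self).aestronglyMeasurable measurableSet_Ioo)⟩
        (qC.continuousAt (Icc_mem_nhds hsIoo.1 hsIoo.2))
    have hψd : ∀ s ∈ Ioo (0:ℝ) T, HasDerivAt
        (fun t => Real.exp (-(t * ρ₀⁻¹)) * ∫ s in (0:ℝ)..t, (ρ₀⁻¹ * EE sol s + FF sol s))
        (Real.exp (-(s * ρ₀⁻¹)) * ((ρ₀⁻¹ * EE sol s + FF sol s)
          - ρ₀⁻¹ * ∫ u in (0:ℝ)..s, (ρ₀⁻¹ * EE sol u + FF sol u))) s := by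
      intro s hsIoo
      have hexp : HasDerivAt (fun t : ℝ => Real.exp (-(t * ρ₀⁻¹)))
          (Real.exp (-(s * ρ₀⁻¹)) * (-ρ₀⁻¹)) s := by
        have h0 : HasDerivAt (fun t : ℝ => -(t * ρ₀⁻¹)) (-ρ₀⁻¹) s := by
          simpa using ((hasDerivAt_id s).mul_const ρ₀⁻¹).fun_neg
        exact h0.exp
      have := hexp.fun_mul (Ideriv s hsIoo)
      exact this.congr_deriv (by ring)
    have hψcont : ContinuousOn
        (fun t => Real.exp (-(t * ρ₀⁻¹)) * ∫ s in (0:ℝ)..t, (ρ₀⁻¹ * EE sol s + FF sol s))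
        (Icc 0 T) :=
      ((Real.continuous_exp.comp (by fun_prop)).continuousOn).mul IfC
    have hΨint : IntervalIntegrable (fun s => Real.exp (-(s * ρ₀⁻¹))
        * ((ρ₀⁻¹ * EE sol s + FF sol s)
          - ρ₀⁻¹ * ∫ u in (0:ℝ)..s, (ρ₀⁻¹ * EE sol u + FF sol u))) volume 0 T :=
      (((Real.continuous_exp.comp (by fun_prop)).continuousOn).mul
        (qC.sub (continuousOn_const.mul IfC))).intervalIntegrable_of_Icc hT.le
    have hFTC := intervalIntegral.integral_eq_sub_of_hasDerivAt_of_le hT.le hψcont hψd hΨint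
    have hmono2 : (∫ s in (0:ℝ)..T, Real.exp (-(s * ρ₀⁻¹))
        * ((ρ₀⁻¹ * EE sol s + FF sol s)
          - ρ₀⁻¹ * ∫ u in (0:ℝ)..s, (ρ₀⁻¹ * EE sol u + FF sol u)))
        ≤ ∫ s in (0:ℝ)..T, FF sol s := by
      refine intervalIntegral.integral_mono_on hT.le hΨint
        (FfC.intervalIntegrable_of_Icc hT.le) ?_
      intro s hsI
      have hE := E_le_I s hsI
      have hf := Fnn s hsI
      have he1 : Real.exp (-(s * ρ₀⁻¹)) ≤ 1 := by
        rw [Real.exp_le_one_iff]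
        have : 0 ≤ s * ρ₀⁻¹ := mul_nonneg hsI.1 (inv_pos.2 hρ₀).le
        linarith
      have he0 := Real.exp_pos (-(s * ρ₀⁻¹))
      have hc := (inv_pos.2 hρ₀).le
      nlinarith [mul_nonneg (mul_nonneg he0.le hc)
          (sub_nonneg.2 hE), mul_nonneg (sub_nonneg.2 he1) hf]
    -- now conclude
    have hψ0 : Real.exp (-(0 * ρ₀⁻¹))
        * ∫ s in (0:ℝ)..(0:ℝ), (ρ₀⁻¹ * EE sol s + FF sol s) = 0 := by
      simp
    rw [hψ0, sub_zero] at hFTC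
    have hkey : Real.exp (-(T * ρ₀⁻¹))
        * (∫ s in (0:ℝ)..T, (ρ₀⁻¹ * EE sol s + FF sol s)) ≤ ∫ s in (0:ℝ)..T, FF sol s := by
      rw [← hFTC]; exact hmono2
    have hmul := mul_le_mul_of_nonneg_left hkey (Real.exp_pos (T / ρ₀)).le
    have hcancel : Real.exp (T / ρ₀) * Real.exp (-(T * ρ₀⁻¹)) = 1 := by
      rw [← Real.exp_add, div_eq_mul_inv]
      simp
    rw [← mul_assoc, hcancel, one_mul] at hmul
    exact hmul
  -- assembling the final chain of inequalities
  have iPt : IntervalIntegrable (PP sol) volume 0 T := PfC.intervalIntegrable_of_Icc hT.le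
  have iMt : IntervalIntegrable (MM sol) volume 0 T := MfC.intervalIntegrable_of_Icc hT.le
  have iKt : IntervalIntegrable (KK sol) volume 0 T := KfC.intervalIntegrable_of_Icc hT.le
  have iJt : IntervalIntegrable (JJ sol) volume 0 T := JfC.intervalIntegrable_of_Icc hT.le
  have hsplit : EE sol T = 2 * (∫ t in (0:ℝ)..T, PP sol t) - 2 * (∫ t in (0:ℝ)..T, MM sol t)
      - 2 * (∫ t in (0:ℝ)..T, KK sol t) := by
    rw [E_FTC T hTmem]
    have hcongr : (∫ s in (0:ℝ)..T, GG sol s)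
        = ∫ s in (0:ℝ)..T, (2 * PP sol s - 2 * MM sol s - 2 * KK sol s) := by
      apply intervalIntegral.integral_congr_ae
      filter_upwards [(Set.countable_singleton T).ae_notMem volume] with s hsne hsI
      rw [uIoc_of_le hT.le] at hsI
      exact Gident s ⟨hsI.1, lt_of_le_of_ne hsI.2 fun h => hsne (h ▸ mem_singleton _)⟩
    rw [hcongr, intervalIntegral.integral_sub ((iPt.const_mul 2).sub (iMt.const_mul 2))
        (iKt.const_mul 2),
      intervalIntegral.integral_sub (iPt.const_mul 2) (iMt.const_mul 2),
      intervalIntegral.integral_const_mul, intervalIntegral.integral_const_mul,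
      intervalIntegral.integral_const_mul]
  have hPq : 2 * (∫ t in (0:ℝ)..T, PP sol t)
      ≤ ∫ s in (0:ℝ)..T, (ρ₀⁻¹ * EE sol s + FF sol s) := by
    rw [← intervalIntegral.integral_const_mul]
    exact intervalIntegral.integral_mono_on hT.le (iPt.const_mul 2)
      (iq T hTmem) twoP_le
  have hMint : 0 ≤ ∫ t in (0:ℝ)..T, MM sol t :=
    intervalIntegral.integral_nonneg hT.le Mnn
  have hEnnT : 0 ≤ EE sol T := Enn T hTmem
  have hKbound : 2 * (∫ t in (0:ℝ)..T, KK sol t)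
      ≤ Real.exp (T / ρ₀) * ∫ s in (0:ℝ)..T, FF sol s := by
    linarith
  -- bound the left-hand side by the Kelvin–Voigt dissipation
  have hinner : ∀ t ∈ Icc (0:ℝ) T, κ₀ * JJ sol t ≤ KK sol t := by
    intro t ht
    rw [JJ, KK, ← intervalIntegral.integral_const_mul]
    exact intervalIntegral.integral_mono_on hl ((iJ t ht).const_mul κ₀) (iK t ht)
      fun x hx => mul_le_mul_of_nonneg_right (hκb x hx) (sq_nonneg _)
  have houter : κ₀ * (∫ t in (0:ℝ)..T, JJ sol t) ≤ ∫ t in (0:ℝ)..T, KK sol t := by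
    rw [← intervalIntegral.integral_const_mul]
    exact intervalIntegral.integral_mono_on hT.le (iJt.const_mul κ₀) iKt hinner
  have hgoal : 2 * κ₀ * (∫ t in (0:ℝ)..T, JJ sol t)
      ≤ Real.exp (T / ρ₀) * ∫ t in (0:ℝ)..T, FF sol t := by linarith
  exact hgoal
end
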